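/- arXiv:2011.02039 — 4 statements merged into one kernel-verified Lean document; each statement's English description precedes it below -/
import Mathlib

section
/- If u_n > 0 for every non-negative integer n, then f is strictly increasing on [0, 1]. -/
open scoped BigOperators

/-- The value `Δ^E_g` of the Engel series with digit sequence `g`
(`g n` is the paper's `g_{n+1}`). -/
noncomputable def engelSum (g : ℕ → ℕ) : ℝ :=
  ∑' n : ℕ, ∏ k ∈ Finset.range (n + 1),
    ((2 : ℝ) + ∑ i ∈ Finset.range (k + 1), (g i : ℝ))⁻¹

/-- The value of the series `r_{g_1} + ∑_{k≥2} r_{g_k} ∏_{i=1}^{k-1} u_{g_i}`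
defining `f` on the digit sequence `g`. -/
noncomputable def fSeries (u r : ℕ → ℝ) (g : ℕ → ℕ) : ℝ :=
  r (g 0) + ∑' k : ℕ, r (g (k + 1)) * ∏ i ∈ Finset.range (k + 1), u (g i)

/-- `rpred r n = r (n-1)`, with the convention `r (-1) = 1`. -/
noncomputable def rpred (r : ℕ → ℝ) (n : ℕ) : ℝ := if n = 0 then 1 else r (n - 1)


/-! ### Auxiliary theory for Engel sums -/

noncomputable def Eterm (c : ℝ) (g : ℕ → ℕ) (n : ℕ) : ℝ :=
  ∏ k ∈ Finset.range (n + 1), (c + ∑ i ∈ Finset.range (k + 1), (g i : ℝ))⁻¹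

noncomputable def Esum (c : ℝ) (g : ℕ → ℕ) : ℝ := ∑' n : ℕ, Eterm c g n

lemma d_pos (c : ℝ) (hc : 2 ≤ c) (g : ℕ → ℕ) (k : ℕ) :
    0 < c + ∑ i ∈ Finset.range (k + 1), (g i : ℝ) := by
  have h : (0:ℝ) ≤ ∑ i ∈ Finset.range (k + 1), (g i : ℝ) := by positivity
  linarith

lemma d_ge (c : ℝ) (g : ℕ → ℕ) (k : ℕ) :
    c + (g 0 : ℝ) ≤ c + ∑ i ∈ Finset.range (k + 1), (g i : ℝ) := by
  have h : (g 0 : ℝ) ≤ ∑ i ∈ Finset.range (k + 1), (g i : ℝ) :=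
    Finset.single_le_sum (f := fun i => (g i : ℝ)) (fun i _ => by positivity)
      (Finset.mem_range.mpr (Nat.succ_pos k))
  linarith

lemma a0_ge (c : ℝ) (hc : 2 ≤ c) (g : ℕ → ℕ) : 2 ≤ c + (g 0 : ℝ) := by
  have : (0:ℝ) ≤ (g 0 : ℝ) := by positivity
  linarith

lemma Eterm_pos (c : ℝ) (hc : 2 ≤ c) (g : ℕ → ℕ) (n : ℕ) : 0 < Eterm c g n :=
  Finset.prod_pos fun k _ => inv_pos.mpr (d_pos c hc g k)

lemma Eterm_le (c : ℝ) (hc : 2 ≤ c) (g : ℕ → ℕ) (n : ℕ) :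
    Eterm c g n ≤ ((c + (g 0 : ℝ))⁻¹) ^ (n + 1) := by
  have h0 : 0 < c + (g 0 : ℝ) := by have := a0_ge c hc g; linarith
  calc Eterm c g n ≤ ∏ k ∈ Finset.range (n+1), (c + (g 0 : ℝ))⁻¹ := by
        apply Finset.prod_le_prod (fun k _ => le_of_lt (inv_pos.mpr (d_pos c hc g k)))
        intro k _
        exact inv_anti₀ h0 (d_ge c g k)
    _ = ((c + (g 0 : ℝ))⁻¹) ^ (n + 1) := by
        rw [Finset.prod_const, Finset.card_range]

lemma Esum_summable (c : ℝ) (hc : 2 ≤ c) (g : ℕ → ℕ) : Summable (Eterm c g) := by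
  have h0 : 0 < c + (g 0 : ℝ) := by have := a0_ge c hc g; linarith
  set q : ℝ := (c + (g 0 : ℝ))⁻¹ with hq
  have hq0 : 0 ≤ q := le_of_lt (inv_pos.mpr h0)
  have hq1 : q < 1 := by
    rw [hq]
    rw [inv_lt_one_iff₀]
    right; have := a0_ge c hc g; linarith
  have hs : Summable (fun n : ℕ => q ^ (n+1)) := by
    have := (summable_geometric_of_lt_one hq0 hq1).mul_left q
    simpa [pow_succ'] using this
  exact Summable.of_nonneg_of_le (fun n => le_of_lt (Eterm_pos c hc g n))
    (fun n => Eterm_le c hc g n) hs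

lemma Esum_le (c : ℝ) (hc : 2 ≤ c) (g : ℕ → ℕ) :
    Esum c g ≤ (c + (g 0 : ℝ) - 1)⁻¹ := by
  have h2 : 2 ≤ c + (g 0 : ℝ) := a0_ge c hc g
  have h0 : 0 < c + (g 0 : ℝ) := by linarith
  set q : ℝ := (c + (g 0 : ℝ))⁻¹ with hq
  have hq0 : 0 ≤ q := le_of_lt (inv_pos.mpr h0)
  have hq1 : q < 1 := by rw [hq, inv_lt_one_iff₀]; right; linarith
  have hs : Summable (fun n : ℕ => q ^ (n+1)) := by
    have := (summable_geometric_of_lt_one hq0 hq1).mul_left q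
    simpa [pow_succ'] using this
  have h1 : Esum c g ≤ ∑' n : ℕ, q ^ (n+1) :=
    Summable.tsum_le_tsum (fun n => Eterm_le c hc g n) (Esum_summable c hc g) hs
  have h3 : ∑' n : ℕ, q ^ (n+1) = q * (1 - q)⁻¹ := by
    have : (fun n : ℕ => q ^ (n+1)) = fun n : ℕ => q * q ^ n := by
      funext n; rw [pow_succ']
    rw [this, tsum_mul_left, tsum_geometric_of_lt_one hq0 hq1]
  have h4 : q * (1 - q)⁻¹ = (c + (g 0 : ℝ) - 1)⁻¹ := by
    have hne : c + (g 0 : ℝ) ≠ 0 := ne_of_gt h0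
    have hne1 : c + (g 0 : ℝ) - 1 ≠ 0 := by intro h; rw [sub_eq_zero] at h; linarith
    rw [hq]
    rw [show (1 : ℝ) - (c + (g 0:ℝ))⁻¹ = (c + (g 0:ℝ) - 1) / (c + (g 0:ℝ)) by
      field_simp]
    field_simp
  rw [h3, h4] at h1; exact h1

lemma Esum_gt (c : ℝ) (hc : 2 ≤ c) (g : ℕ → ℕ) :
    (c + (g 0 : ℝ))⁻¹ < Esum c g := by
  have hsum := Esum_summable c hc g
  have key : Eterm c g 0 + Eterm c g 1 ≤ Esum c g := by
    have := Summable.sum_le_tsum (Finset.range 2) (fun m _ => le_of_lt (Eterm_pos c hc g m)) hsum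
    simpa [Finset.sum_range_succ, Esum] using this
  have h0 : Eterm c g 0 = (c + (g 0 : ℝ))⁻¹ := by
    simp [Eterm]
  have h1 : 0 < Eterm c g 1 := Eterm_pos c hc g 1
  rw [h0] at key; linarith

lemma Esum_rec (c : ℝ) (hc : 2 ≤ c) (g : ℕ → ℕ) :
    Esum c g = (c + (g 0 : ℝ))⁻¹ * (1 + Esum (c + (g 0 : ℝ)) (fun i => g (i+1))) := by
  have hsum := Esum_summable c hc g
  have hstep : ∀ n : ℕ, Eterm c g (n+1)
      = (c + (g 0 : ℝ))⁻¹ * Eterm (c + (g 0 : ℝ)) (fun i => g (i+1)) n := by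
    intro n
    unfold Eterm
    rw [Finset.prod_range_succ' (fun k => (c + ∑ i ∈ Finset.range (k + 1), (g i : ℝ))⁻¹) (n+1)]
    rw [mul_comm]
    congr 1
    · simp
    · apply Finset.prod_congr rfl
      intro k _
      congr 1
      rw [Finset.sum_range_succ' (fun i => (g i : ℝ)) (k+1)]
      ring
  rw [Esum, Summable.tsum_eq_zero_add hsum]
  have h0 : Eterm c g 0 = (c + (g 0 : ℝ))⁻¹ := by simp [Eterm]
  calc Eterm c g 0 + ∑' n, Eterm c g (n+1)
      = (c + (g 0 : ℝ))⁻¹ + ∑' n, (c + (g 0 : ℝ))⁻¹ * Eterm (c + (g 0 : ℝ)) (fun i => g (i+1)) n := by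
        rw [h0]; congr 1; exact tsum_congr hstep
    _ = (c + (g 0 : ℝ))⁻¹ * (1 + Esum (c + (g 0 : ℝ)) (fun i => g (i+1))) := by
        rw [tsum_mul_left, Esum]; ring

lemma Elex : ∀ (m : ℕ) (c : ℝ), 2 ≤ c → ∀ (g g' : ℕ → ℕ),
    (∀ i < m, g i = g' i) → g m < g' m → Esum c g' < Esum c g := by
  intro m
  induction m with
  | zero =>
    intro c hc g g' _ hlt
    have h1 : Esum c g' ≤ (c + (g' 0 : ℝ) - 1)⁻¹ := Esum_le c hc g'
    have h2 : (c + (g 0 : ℝ))⁻¹ < Esum c g := Esum_gt c hc g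
    have h3 : (c + (g' 0 : ℝ) - 1)⁻¹ ≤ (c + (g 0 : ℝ))⁻¹ := by
      have hgg : (g 0 : ℝ) + 1 ≤ (g' 0 : ℝ) := by exact_mod_cast hlt
      have h0 : 0 < c + (g 0 : ℝ) := by have := a0_ge c hc g; linarith
      apply inv_anti₀ h0; linarith
    linarith
  | succ m ih =>
    intro c hc g g' heq hlt
    have h00 : g 0 = g' 0 := heq 0 (Nat.succ_pos m)
    rw [Esum_rec c hc g, Esum_rec c hc g', ← h00]
    have hc' : 2 ≤ c + (g 0 : ℝ) := a0_ge c hc g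
    have hlt' : Esum (c + (g 0:ℝ)) (fun i => g' (i+1)) < Esum (c + (g 0:ℝ)) (fun i => g (i+1)) := by
      apply ih (c + (g 0:ℝ)) hc'
      · intro i hi; exact heq (i+1) (Nat.succ_lt_succ hi)
      · exact hlt
    have hp : 0 < (c + (g 0 : ℝ))⁻¹ := inv_pos.mpr (by linarith)
    have := mul_lt_mul_of_pos_left (add_lt_add_left hlt' 1) hp
    linarith

section F
variable (u r : ℕ → ℝ)
  (hpos : ∀ n, 0 < u n)
  (hr : ∀ n, r n = 1 - ∑ i ∈ Finset.range (n + 1), u i)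
  (hr01 : ∀ n, 0 < r n ∧ r n < 1)

noncomputable def Fterm (g : ℕ → ℕ) (k : ℕ) : ℝ :=
  r (g (k + 1)) * ∏ i ∈ Finset.range (k + 1), u (g i)

noncomputable def Pprod (g : ℕ → ℕ) (m : ℕ) : ℝ := ∏ i ∈ Finset.range m, u (g i)

include hpos hr01 in
lemma Fterm_pos (g : ℕ → ℕ) (k : ℕ) : 0 < Fterm u r g k :=
  mul_pos (hr01 _).1 (Finset.prod_pos fun i _ => hpos _)

include hpos hr in
lemma hru (n : ℕ) : r n + u n = 1 - ∑ i ∈ Finset.range n, u i := by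
  rw [hr n, Finset.sum_range_succ]; ring

include hpos hr in
lemma hru_le (n : ℕ) : r n + u n ≤ 1 := by
  have h := hru u r hpos hr n
  have h2 : (0:ℝ) ≤ ∑ i ∈ Finset.range n, u i :=
    Finset.sum_nonneg fun i _ => le_of_lt (hpos i)
  linarith

include hpos hr in
lemma Fterm_le (g : ℕ → ℕ) (k : ℕ) :
    Fterm u r g k ≤ Pprod u g (k+1) - Pprod u g (k+2) := by
  have hP : 0 < Pprod u g (k+1) := Finset.prod_pos fun i _ => hpos _
  have h1 : r (g (k+1)) ≤ 1 - u (g (k+1)) := by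
    have := hru_le u r hpos hr (g (k+1)); linarith
  have h2 : Pprod u g (k+2) = Pprod u g (k+1) * u (g (k+1)) := by
    rw [Pprod, Pprod, Finset.prod_range_succ]
  calc Fterm u r g k = r (g (k+1)) * Pprod u g (k+1) := rfl
    _ ≤ (1 - u (g (k+1))) * Pprod u g (k+1) := by
        apply mul_le_mul_of_nonneg_right h1 (le_of_lt hP)
    _ = Pprod u g (k+1) - Pprod u g (k+2) := by rw [h2]; ring

include hpos hr in
lemma Fsum_range_le (g : ℕ → ℕ) (N : ℕ) :
    ∑ k ∈ Finset.range N, Fterm u r g k ≤ u (g 0) := by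
  have h1 : ∑ k ∈ Finset.range N, Fterm u r g k
      ≤ ∑ k ∈ Finset.range N, (Pprod u g (k+1) - Pprod u g (k+2)) :=
    Finset.sum_le_sum fun k _ => Fterm_le u r hpos hr g k
  have h2 : ∑ k ∈ Finset.range N, (Pprod u g (k+1) - Pprod u g (k+2))
      = Pprod u g 1 - Pprod u g (N+1) :=
    Finset.sum_range_sub' (fun k => Pprod u g (k+1)) N
  have h3 : 0 < Pprod u g (N+1) := Finset.prod_pos fun i _ => hpos _
  have h4 : Pprod u g 1 = u (g 0) := by simp [Pprod]
  linarith

include hpos hr hr01 in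
lemma Fsummable (g : ℕ → ℕ) : Summable (Fterm u r g) :=
  summable_of_sum_range_le (fun k => le_of_lt (Fterm_pos u r hpos hr01 g k))
    (Fsum_range_le u r hpos hr g)

include hpos hr hr01 in
lemma Ftsum_le (g : ℕ → ℕ) : ∑' k, Fterm u r g k ≤ u (g 0) :=
  Summable.tsum_le_of_sum_range_le (Fsummable u r hpos hr hr01 g) (Fsum_range_le u r hpos hr g)

include hpos hr hr01 in
lemma F_gt (g : ℕ → ℕ) : r (g 0) < fSeries u r g := by
  have hsum := Fsummable u r hpos hr hr01 g
  have h1 : Fterm u r g 0 ≤ ∑' k, Fterm u r g k :=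
    Summable.le_tsum hsum 0 (fun m _ => le_of_lt (Fterm_pos u r hpos hr01 g m))
  have h2 : 0 < Fterm u r g 0 := Fterm_pos u r hpos hr01 g 0
  have : fSeries u r g = r (g 0) + ∑' k, Fterm u r g k := rfl
  rw [this]; linarith

include hpos hr hr01 in
lemma F_le (g : ℕ → ℕ) : fSeries u r g ≤ 1 - ∑ i ∈ Finset.range (g 0), u i := by
  have h1 := Ftsum_le u r hpos hr hr01 g
  have h2 := hru u r hpos hr (g 0)
  have : fSeries u r g = r (g 0) + ∑' k, Fterm u r g k := rfl
  rw [this]; linarith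

include hpos hr hr01 in
lemma F_rec (g : ℕ → ℕ) :
    fSeries u r g = r (g 0) + u (g 0) * fSeries u r (fun i => g (i+1)) := by
  set g' : ℕ → ℕ := fun i => g (i+1) with hg'
  set h : ℕ → ℝ := fun k => r (g' k) * ∏ i ∈ Finset.range k, u (g' i) with hh
  have hk : ∀ k, Fterm u r g k = u (g 0) * h k := by
    intro k
    rw [hh, Fterm]
    simp only []
    rw [Finset.prod_range_succ' (fun i => u (g i)) k]
    ring
  have hsucc : ∀ k, h (k+1) = Fterm u r g' k := fun k => rfl
  have hsum' : Summable (Fterm u r g') := Fsummable u r hpos hr hr01 g'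
  have hsumh : Summable h := by
    apply (summable_nat_add_iff 1).mp
    simpa [hsucc] using hsum'
  have h0 : h 0 = r (g' 0) := by simp [hh]
  have e1 : ∑' k, h k = fSeries u r g' := by
    rw [Summable.tsum_eq_zero_add hsumh, h0]
    have : ∑' k, h (k+1) = ∑' k, Fterm u r g' k := tsum_congr hsucc
    rw [this]; rfl
  have e2 : fSeries u r g = r (g 0) + ∑' k, Fterm u r g k := rfl
  rw [e2, tsum_congr hk, tsum_mul_left, e1]

include hpos hr hr01 in
lemma Flex : ∀ (m : ℕ) (g g' : ℕ → ℕ),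
    (∀ i < m, g i = g' i) → g m < g' m → fSeries u r g' < fSeries u r g := by
  intro m
  induction m with
  | zero =>
    intro g g' _ hlt
    have h1 : fSeries u r g' ≤ 1 - ∑ i ∈ Finset.range (g' 0), u i :=
      F_le u r hpos hr hr01 g'
    have h2 : r (g 0) < fSeries u r g := F_gt u r hpos hr hr01 g
    have h3 : 1 - ∑ i ∈ Finset.range (g' 0), u i ≤ r (g 0) := by
      rw [hr (g 0)]
      have hsub : Finset.range (g 0 + 1) ⊆ Finset.range (g' 0) :=
        Finset.range_subset_range.mpr hlt
      have := Finset.sum_le_sum_of_subset_of_nonneg hsub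
        (fun i _ _ => le_of_lt (hpos i))
      linarith
    linarith
  | succ m ih =>
    intro g g' heq hlt
    have h00 : g 0 = g' 0 := heq 0 (Nat.succ_pos m)
    rw [F_rec u r hpos hr hr01 g, F_rec u r hpos hr hr01 g', ← h00]
    have hlt' : fSeries u r (fun i => g' (i+1)) < fSeries u r (fun i => g (i+1)) := by
      apply ih
      · intro i hi; exact heq (i+1) (Nat.succ_lt_succ hi)
      · exact hlt
    have := mul_lt_mul_of_pos_left hlt' (hpos (g 0))
    linarith

end F

/-- if all u_n > 0 then f is strictly increasing on [0,1]. -/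
theorem stmt13
    (u r : ℕ → ℝ)
    (hu_sum : HasSum u 1)
    (hu_abs : ∀ n, |u n| < 1)
    (hr : ∀ n, r n = 1 - ∑ i ∈ Finset.range (n + 1), u i)
    (hr01 : ∀ n, 0 < r n ∧ r n < 1)
    (G : ℝ → ℕ → ℕ)
    (hG : ∀ x ∈ Set.Ioc (0:ℝ) 1, engelSum (G x) = x)
    (hGuniq : ∀ x ∈ Set.Ioc (0:ℝ) 1, ∀ g : ℕ → ℕ, engelSum g = x → g = G x)
    (f : ℝ → ℝ)
    (hf : ∀ x ∈ Set.Ioc (0:ℝ) 1, f x = fSeries u r (G x))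
    (hf0 : f 0 = 0)
    (hpos : ∀ n, 0 < u n) :
    StrictMonoOn f (Set.Icc (0:ℝ) 1) := by
  have engelSum_eq : ∀ g : ℕ → ℕ, engelSum g = Esum 2 g := fun g => rfl
  intro x hx y hy hxy
  rcases eq_or_lt_of_le hx.1 with h0 | h0
  · -- x = 0
    have hy' : y ∈ Set.Ioc (0:ℝ) 1 := ⟨lt_of_le_of_lt hx.1 hxy, hy.2⟩
    rw [← h0, hf0, hf y hy']
    have h1 := F_gt u r hpos hr hr01 (G y)
    have h2 := (hr01 ((G y) 0)).1
    linarith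
  · have hx' : x ∈ Set.Ioc (0:ℝ) 1 := ⟨h0, hx.2⟩
    have hy' : y ∈ Set.Ioc (0:ℝ) 1 := ⟨lt_trans h0 hxy, hy.2⟩
    have hne : G x ≠ G y := by
      intro h
      have : x = y := by rw [← hG x hx', ← hG y hy', h]
      exact (ne_of_lt hxy) this
    have hexists : ∃ n, G x n ≠ G y n := Function.ne_iff.mp hne
    have hdm : G x (Nat.find hexists) ≠ G y (Nat.find hexists) := Nat.find_spec hexists
    have hprev : ∀ i < Nat.find hexists, G x i = G y i :=
      fun i hi => not_not.mp (Nat.find_min hexists hi)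
    rcases lt_or_gt_of_ne hdm with hlt | hgt
    · exfalso
      have h1 := Elex (Nat.find hexists) 2 (by norm_num) (G x) (G y) hprev hlt
      rw [← engelSum_eq, ← engelSum_eq, hG x hx', hG y hy'] at h1
      linarith
    · rw [hf x hx', hf y hy']
      exact Flex u r hpos hr hr01 (Nat.find hexists) (G y) (G x)
        (fun i hi => (hprev i hi).symm) hgt
end

section
/- If u_n ≥ 0 for every non-negative integer n, then the non-decreasing continuous function f (with f(0) = 0, f(1) = 1) is pure: the Lebesgue–Stieltjes measure induced by f on [0,1] is either absolutely continuous with respect to Lebesgue measure or mutually singular with Lebesgue measure (equivalently, f is either absolutely continuous on [0,1] or f′(x) = 0 for Lebesgue-almost every x). -/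
open scoped BigOperators

open Finset Filter MeasureTheory Set

namespace Stmt14

/-- the `n`-th Engel denominator -/
def q (g : ℕ → ℕ) (n : ℕ) : ℕ := 2 + ∑ i ∈ Finset.range (n + 1), g i

lemma two_le_q (g : ℕ → ℕ) (n : ℕ) : 2 ≤ q g n := Nat.le_add_right _ _

lemma q_mono (g : ℕ → ℕ) : Monotone (q g) := fun a b hab => by
  unfold q
  exact Nat.add_le_add_left (Finset.sum_le_sum_of_subset (Finset.range_subset_range.2 (by omega))) 2

lemma q_succ (g : ℕ → ℕ) (n : ℕ) : q g (n + 1) = q g n + g (n + 1) := by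
  unfold q; rw [Finset.sum_range_succ]; ring

lemma one_lt_qr (g : ℕ → ℕ) (n : ℕ) : (1 : ℝ) < (q g n : ℝ) := by
  have := two_le_q g n; exact_mod_cast by omega

lemma qr_pos (g : ℕ → ℕ) (n : ℕ) : (0 : ℝ) < (q g n : ℝ) := lt_trans one_pos (one_lt_qr g n)

lemma qr_sub_one_pos (g : ℕ → ℕ) (n : ℕ) : (0 : ℝ) < (q g n : ℝ) - 1 := by
  have := one_lt_qr g n; linarith

/-- the `n`-th term of the Engel series -/
noncomputable def term (g : ℕ → ℕ) (n : ℕ) : ℝ := ∏ k ∈ Finset.range (n + 1), ((q g k : ℝ))⁻¹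

lemma engelSum_eq_tsum_term (g : ℕ → ℕ) : engelSum g = ∑' n, term g n := by
  unfold engelSum term q
  congr 1; funext n; congr 1; funext k; push_cast; ring_nf

lemma term_pos (g : ℕ → ℕ) (n : ℕ) : 0 < term g n :=
  Finset.prod_pos fun k _ => inv_pos.2 (qr_pos g k)

lemma term_le_pow (g : ℕ → ℕ) (c : ℝ) (hc : ∀ k, ((q g k : ℝ))⁻¹ ≤ c) (hc0 : 0 ≤ c) (n : ℕ) :
    term g n ≤ c ^ (n + 1) := by
  calc term g n ≤ ∏ _k ∈ Finset.range (n + 1), c :=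
        Finset.prod_le_prod (fun k _ => le_of_lt (inv_pos.2 (qr_pos g k))) (fun k _ => hc k)
    _ = c ^ (n + 1) := by rw [Finset.prod_const, Finset.card_range]

lemma inv_qr_le_half (g : ℕ → ℕ) (k : ℕ) : ((q g k : ℝ))⁻¹ ≤ 1 / 2 := by
  rw [one_div]
  apply inv_anti₀ (by norm_num)
  exact_mod_cast two_le_q g k

lemma term_le_half_pow (g : ℕ → ℕ) (n : ℕ) : term g n ≤ (1 / 2 : ℝ) ^ (n + 1) :=
  term_le_pow g (1 / 2) (inv_qr_le_half g) (by norm_num) n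

lemma summable_term (g : ℕ → ℕ) : Summable (term g) := by
  apply Summable.of_nonneg_of_le (fun n => le_of_lt (term_pos g n)) (term_le_half_pow g)
  exact Summable.comp_injective (summable_geometric_of_lt_one (by norm_num) (by norm_num))
    (fun a b h => by omega)

lemma engelSum_pos (g : ℕ → ℕ) : 0 < engelSum g := by
  rw [engelSum_eq_tsum_term]
  exact Summable.tsum_pos (summable_term g) (fun n => le_of_lt (term_pos g n)) 0 (term_pos g 0)

/-- partial sum of the Engel series -/
noncomputable def A (g : ℕ → ℕ) (n : ℕ) : ℝ := ∑ k ∈ Finset.range n, term g k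

/-- product of inverse denominators -/
noncomputable def Lp (g : ℕ → ℕ) (n : ℕ) : ℝ := ∏ i ∈ Finset.range n, ((q g i : ℝ))⁻¹

lemma Lp_pos (g : ℕ → ℕ) (n : ℕ) : 0 < Lp g n :=
  Finset.prod_pos fun k _ => inv_pos.2 (qr_pos g k)

lemma Lp_succ (g : ℕ → ℕ) (n : ℕ) : Lp g (n + 1) = Lp g n * ((q g n : ℝ))⁻¹ := by
  unfold Lp; rw [Finset.prod_range_succ]

lemma term_eq_Lp (g : ℕ → ℕ) (n : ℕ) : term g n = Lp g (n + 1) := rfl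

lemma A_succ (g : ℕ → ℕ) (n : ℕ) : A g (n + 1) = A g n + term g n := by
  unfold A; rw [Finset.sum_range_succ]

lemma Lp_le_pow (g : ℕ → ℕ) (n : ℕ) : Lp g n ≤ (1 / 2 : ℝ) ^ n := by
  calc Lp g n ≤ ∏ _k ∈ Finset.range n, (1 / 2 : ℝ) :=
        Finset.prod_le_prod (fun k _ => le_of_lt (inv_pos.2 (qr_pos g k)))
          (fun k _ => inv_qr_le_half g k)
    _ = (1 / 2 : ℝ) ^ n := by rw [Finset.prod_const, Finset.card_range]

/-- the shifted digit sequence, whose Engel denominators are `q g (n + m)` -/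
def tailSeq (g : ℕ → ℕ) (n : ℕ) : ℕ → ℕ := fun m => if m = 0 then q g n - 2 else g (n + m)

lemma q_tailSeq (g : ℕ → ℕ) (n m : ℕ) : q (tailSeq g n) m = q g (n + m) := by
  induction m with
  | zero =>
    have h2 := two_le_q g n
    show 2 + ∑ i ∈ Finset.range 1, tailSeq g n i = q g n
    rw [Finset.sum_range_one]
    show 2 + (q g n - 2) = q g n
    omega
  | succ m ih =>
    rw [q_succ, ih, ← Nat.add_assoc, q_succ]
    simp [tailSeq, Nat.add_assoc]

lemma term_split (g : ℕ → ℕ) (n m : ℕ) :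
    term g (m + n) = Lp g n * term (tailSeq g n) m := by
  unfold term Lp
  have : n + (m + 1) = m + n + 1 := by omega
  rw [← this, Finset.prod_range_add]
  congr 1
  apply Finset.prod_congr rfl
  intro k _
  rw [q_tailSeq]

lemma engel_split (g : ℕ → ℕ) (n : ℕ) :
    engelSum g = A g n + Lp g n * engelSum (tailSeq g n) := by
  rw [engelSum_eq_tsum_term, engelSum_eq_tsum_term, ← Summable.sum_add_tsum_nat_add n (summable_term g)]
  unfold A
  congr 1
  rw [← tsum_mul_left]
  congr 1; funext m
  exact term_split g n m

lemma engelSum_le (g : ℕ → ℕ) : engelSum g ≤ ((q g 0 : ℝ) - 1)⁻¹ := by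
  rw [engelSum_eq_tsum_term]
  have hq0 : (0:ℝ) < (q g 0 : ℝ) := qr_pos g 0
  have hinv : ((q g 0 : ℝ))⁻¹ < 1 := inv_lt_one_of_one_lt₀ (one_lt_qr g 0)
  have hinv0 : (0:ℝ) ≤ ((q g 0 : ℝ))⁻¹ := le_of_lt (inv_pos.2 hq0)
  have h1 : ∀ n, term g n ≤ ((q g 0 : ℝ))⁻¹ ^ (n + 1) := by
    intro n
    apply term_le_pow g _ _ hinv0 n
    intro k
    apply inv_anti₀ hq0
    exact_mod_cast q_mono g (Nat.zero_le k)
  have hsumgeo : Summable (fun n : ℕ => ((q g 0 : ℝ))⁻¹ ^ (n + 1)) := by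
    apply Summable.comp_injective (summable_geometric_of_lt_one hinv0 hinv)
    exact fun a b => by omega
  calc (∑' n, term g n) ≤ ∑' n, ((q g 0 : ℝ))⁻¹ ^ (n + 1) :=
        Summable.tsum_le_tsum h1 (summable_term g) hsumgeo
    _ = ((q g 0 : ℝ))⁻¹ * (1 - ((q g 0 : ℝ))⁻¹)⁻¹ := by
        have : (fun n : ℕ => ((q g 0 : ℝ))⁻¹ ^ (n + 1))
            = fun n : ℕ => ((q g 0 : ℝ))⁻¹ * ((q g 0 : ℝ))⁻¹ ^ n := by
          funext n; rw [pow_succ]; ring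
        rw [this, tsum_mul_left, tsum_geometric_of_lt_one hinv0 hinv]
    _ = ((q g 0 : ℝ) - 1)⁻¹ := by
        have h1 : (1 : ℝ) - ((q g 0 : ℝ))⁻¹ = ((q g 0 : ℝ) - 1) / (q g 0 : ℝ) := by
          field_simp
        rw [h1, inv_div]
        have h2 : ((q g 0 : ℝ) - 1) ≠ 0 := ne_of_gt (qr_sub_one_pos g 0)
        field_simp

lemma engelSum_le_one (g : ℕ → ℕ) : engelSum g ≤ 1 := by
  calc engelSum g ≤ ((q g 0 : ℝ) - 1)⁻¹ := engelSum_le g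
    _ ≤ 1 := by
      have : (1:ℝ) ≤ (q g 0 : ℝ) - 1 := by
        have := two_le_q g 0
        have : (2:ℝ) ≤ (q g 0 : ℝ) := by exact_mod_cast this
        linarith
      calc ((q g 0 : ℝ) - 1)⁻¹ ≤ 1⁻¹ := inv_anti₀ one_pos this
        _ = 1 := inv_one

lemma lt_engelSum (g : ℕ → ℕ) : ((q g 0 : ℝ))⁻¹ < engelSum g := by
  rw [engelSum_eq_tsum_term, Summable.tsum_eq_zero_add (summable_term g)]
  have h0 : term g 0 = ((q g 0 : ℝ))⁻¹ := by
    unfold term; rw [Finset.prod_range_one]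
  have : 0 < ∑' n, term g (n + 1) :=
    Summable.tsum_pos ((summable_nat_add_iff 1).2 (summable_term g)) (fun n => le_of_lt (term_pos g _)) 0
      (term_pos g 1)
  linarith

/-- digit sequences agreeing up to index `n` have the same data up to rank `n` -/
lemma q_congr {g h : ℕ → ℕ} {n : ℕ} (hgh : ∀ i, i ≤ n → g i = h i) {k : ℕ} (hk : k ≤ n) :
    q g k = q h k := by
  unfold q
  congr 1
  apply Finset.sum_congr rfl
  intro i hi
  have := Finset.mem_range.mp hi
  exact hgh i (by omega) ▸ rfl

lemma term_congr {g h : ℕ → ℕ} {n : ℕ} (hgh : ∀ i, i ≤ n → g i = h i) {k : ℕ} (hk : k ≤ n) :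
    term g k = term h k := by
  unfold term
  apply Finset.prod_congr rfl
  intro i hi
  have := Finset.mem_range.mp hi
  rw [q_congr hgh (by omega)]

lemma A_congr {g h : ℕ → ℕ} {n : ℕ} (hgh : ∀ i, i ≤ n → g i = h i) :
    A g (n + 1) = A h (n + 1) := by
  unfold A
  apply Finset.sum_congr rfl
  intro k hk
  have := Finset.mem_range.mp hk
  exact term_congr hgh (by omega)

lemma Lp_congr {g h : ℕ → ℕ} {n : ℕ} (hgh : ∀ i, i ≤ n → g i = h i) :
    Lp g (n + 1) = Lp h (n + 1) := by
  unfold Lp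
  apply Finset.prod_congr rfl
  intro k hk
  have := Finset.mem_range.mp hk
  rw [q_congr hgh (by omega)]

/-- the constant-denominator digit sequence, `q (geomSeq c) m = c` for `c ≥ 2` -/
def geomSeq (c : ℕ) : ℕ → ℕ := fun m => if m = 0 then c - 2 else 0

lemma q_geomSeq {c : ℕ} (hc : 2 ≤ c) (m : ℕ) : q (geomSeq c) m = c := by
  induction m with
  | zero =>
    show 2 + ∑ i ∈ Finset.range 1, geomSeq c i = c
    rw [Finset.sum_range_one]
    show 2 + (c - 2) = c
    omega
  | succ m ih =>
    rw [q_succ, ih]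
    simp [geomSeq]

lemma engel_geomSeq {c : ℕ} (hc : 2 ≤ c) : engelSum (geomSeq c) = ((c : ℝ) - 1)⁻¹ := by
  have hc1 : (1:ℝ) < (c:ℝ) := by exact_mod_cast by omega
  have hterm : ∀ n, term (geomSeq c) n = ((c:ℝ))⁻¹ * ((c:ℝ))⁻¹ ^ n := by
    intro n
    unfold term
    have : ∀ k ∈ Finset.range (n+1), ((q (geomSeq c) k : ℝ))⁻¹ = ((c:ℝ))⁻¹ := by
      intro k _; rw [q_geomSeq hc]
    rw [Finset.prod_congr rfl this, Finset.prod_const, Finset.card_range, pow_succ]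
    ring
  have hinv0 : (0:ℝ) ≤ ((c:ℝ))⁻¹ := inv_nonneg.2 (by positivity)
  have hinv1 : ((c:ℝ))⁻¹ < 1 := inv_lt_one_of_one_lt₀ hc1
  rw [engelSum_eq_tsum_term]
  calc (∑' n, term (geomSeq c) n) = ∑' n, ((c:ℝ))⁻¹ * ((c:ℝ))⁻¹ ^ n := by
        congr 1; funext n; exact hterm n
    _ = ((c:ℝ))⁻¹ * (1 - ((c:ℝ))⁻¹)⁻¹ := by
        rw [tsum_mul_left, tsum_geometric_of_lt_one hinv0 hinv1]
    _ = ((c : ℝ) - 1)⁻¹ := by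
        have h1 : (1 : ℝ) - ((c:ℝ))⁻¹ = ((c:ℝ) - 1) / (c:ℝ) := by
          field_simp
        rw [h1, inv_div]
        have h2 : ((c:ℝ) - 1) ≠ 0 := by linarith
        field_simp

/-- digits of the right endpoint of the rank-`n+1` cylinder: `g 0, …, g n, 0, 0, …` -/
def bseq (g : ℕ → ℕ) (n : ℕ) : ℕ → ℕ := fun m => if m ≤ n then g m else 0

/-- digits of the left endpoint of the rank-`n+1` cylinder -/
def aseq (g : ℕ → ℕ) (n : ℕ) : ℕ → ℕ :=
  fun m => if m < n then g m else if m = n then g n + 1 else 0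

lemma bseq_prefix (g : ℕ → ℕ) (n : ℕ) : ∀ i, i ≤ n → bseq g n i = g i := by
  intro i hi; simp [bseq, hi]

lemma aseq_prefix (g : ℕ → ℕ) {n : ℕ} (hn : 0 < n) : ∀ i, i ≤ n - 1 → aseq g n i = g i := by
  intro i hi
  have : i < n := by omega
  simp [aseq, this]

lemma q_aseq_last (g : ℕ → ℕ) (n : ℕ) : q (aseq g n) n = q g n + 1 := by
  cases n with
  | zero =>
    show 2 + ∑ i ∈ Finset.range 1, aseq g 0 i = q g 0 + 1
    rw [Finset.sum_range_one]
    have : aseq g 0 0 = g 0 + 1 := by simp [aseq]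
    rw [this]
    show 2 + (g 0 + 1) = 2 + ∑ i ∈ Finset.range 1, g i + 1
    rw [Finset.sum_range_one]
    omega
  | succ k =>
    rw [q_succ, q_succ, q_congr (n := k) (aseq_prefix g (Nat.succ_pos k)) (le_refl k)]
    have : aseq g (k + 1) (k + 1) = g (k + 1) + 1 := by simp [aseq]
    omega

lemma tail_bseq (g : ℕ → ℕ) (n : ℕ) : tailSeq (bseq g n) (n + 1) = geomSeq (q g n) := by
  funext m
  rcases Nat.eq_zero_or_pos m with hm | hm
  · subst hm
    show q (bseq g n) (n + 1) - 2 = q g n - 2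
    rw [q_succ]
    have h1 : q (bseq g n) n = q g n := q_congr (bseq_prefix g n) (le_refl n)
    have h2 : bseq g n (n + 1) = 0 := by simp [bseq]
    rw [h1, h2]
    omega
  · have hm0 : m ≠ 0 := by omega
    simp only [tailSeq, geomSeq, if_neg hm0]
    simp only [bseq]
    exact if_neg (by omega)

lemma tail_aseq (g : ℕ → ℕ) (n : ℕ) : tailSeq (aseq g n) n = geomSeq (q g n + 1) := by
  funext m
  rcases Nat.eq_zero_or_pos m with hm | hm
  · subst hm
    show q (aseq g n) n - 2 = q g n + 1 - 2
    rw [q_aseq_last]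
  · have hm0 : m ≠ 0 := by omega
    simp only [tailSeq, geomSeq, if_neg hm0]
    simp only [aseq]
    rw [if_neg (by omega), if_neg (by omega)]

/-- value of the right endpoint -/
lemma engel_bseq (g : ℕ → ℕ) (n : ℕ) :
    engelSum (bseq g n) = A g (n + 1) + Lp g (n + 1) * ((q g n : ℝ) - 1)⁻¹ := by
  rw [engel_split (bseq g n) (n + 1), tail_bseq, engel_geomSeq (two_le_q g n),
    A_congr (bseq_prefix g n), Lp_congr (bseq_prefix g n)]

/-- value of the left endpoint: it equals `A g (n+1)` -/
lemma engel_aseq (g : ℕ → ℕ) (n : ℕ) : engelSum (aseq g n) = A g (n + 1) := by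
  rw [engel_split (aseq g n) n, tail_aseq,
    engel_geomSeq (by have := two_le_q g n; omega)]
  have hc : ((q g n + 1 : ℕ) : ℝ) - 1 = (q g n : ℝ) := by push_cast; ring
  rw [hc]
  have hA : A (aseq g n) n = A g n := by
    unfold A
    apply Finset.sum_congr rfl
    intro k hk
    have hkn := Finset.mem_range.mp hk
    exact term_congr (n := n - 1) (aseq_prefix g (by omega)) (by omega)
  have hL : Lp (aseq g n) n = Lp g n := by
    unfold Lp
    apply Finset.prod_congr rfl
    intro k hk
    have hkn := Finset.mem_range.mp hk
    rw [q_congr (n := n - 1) (aseq_prefix g (by omega)) (by omega)]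
  rw [hA, hL, A_succ, term_eq_Lp, Lp_succ]

noncomputable def fSeries' (u r : ℕ → ℝ) (g : ℕ → ℕ) : ℝ :=
  r (g 0) + ∑' k : ℕ, r (g (k + 1)) * ∏ i ∈ Finset.range (k + 1), u (g i)

section FSeries

variable {u r : ℕ → ℝ}

/-- the k-th term of the series defining f -/
noncomputable def fterm (u r : ℕ → ℝ) (h : ℕ → ℕ) (k : ℕ) : ℝ :=
  r (h k) * ∏ i ∈ Finset.range k, u (h i)

/-- product of the u's over the first k digits -/
noncomputable def Pu (u : ℕ → ℝ) (g : ℕ → ℕ) (k : ℕ) : ℝ := ∏ i ∈ Finset.range k, u (g i)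

lemma exists_bound (hu_sum : Summable u) (hu_abs : ∀ n, |u n| < 1) (hpos : ∀ n, 0 ≤ u n) :
    ∃ c : ℝ, 0 ≤ c ∧ c < 1 ∧ ∀ n, u n ≤ c := by
  have h0 : Tendsto u atTop (nhds 0) := hu_sum.tendsto_atTop_zero
  obtain ⟨N, hN⟩ := Metric.tendsto_atTop.mp h0 (1/2) (by norm_num)
  have hN' : ∀ n, N ≤ n → u n ≤ 1/2 := by
    intro n hn
    have := hN n hn
    rw [Real.dist_eq, sub_zero] at this
    exact le_of_lt (lt_of_le_of_lt (le_abs_self _) this)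
  have main : ∀ M : ℕ, ∃ c : ℝ, 0 ≤ c ∧ c < 1 ∧ ∀ n < M, u n ≤ c := by
    intro M
    induction M with
    | zero => exact ⟨0, le_refl _, one_pos, fun n hn => absurd hn (Nat.not_lt_zero n)⟩
    | succ M ih =>
      obtain ⟨c, hc0, hc1, hc⟩ := ih
      refine ⟨max c (u M), le_trans hc0 (le_max_left _ _), ?_, ?_⟩
      · exact max_lt hc1 (lt_of_le_of_lt (le_abs_self _) (hu_abs M))
      · intro n hn
        rcases Nat.lt_succ_iff_lt_or_eq.mp hn with h | h
        · exact le_trans (hc n h) (le_max_left _ _)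
        · exact h ▸ le_max_right _ _
  obtain ⟨c, hc0, hc1, hc⟩ := main N
  refine ⟨max c (1/2), le_trans hc0 (le_max_left _ _), max_lt hc1 (by norm_num), ?_⟩
  intro n
  rcases lt_or_ge n N with h | h
  · exact le_trans (hc n h) (le_max_left _ _)
  · exact le_trans (hN' n h) (le_max_right _ _)

lemma fterm_nonneg (hr01 : ∀ n, 0 < r n ∧ r n < 1) (hpos : ∀ n, 0 ≤ u n) (h : ℕ → ℕ) (k : ℕ) :
    0 ≤ fterm u r h k :=
  mul_nonneg (le_of_lt (hr01 _).1) (Finset.prod_nonneg fun i _ => hpos _)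

lemma summable_fterm (hu_sum : Summable u) (hu_abs : ∀ n, |u n| < 1)
    (hr01 : ∀ n, 0 < r n ∧ r n < 1) (hpos : ∀ n, 0 ≤ u n) (h : ℕ → ℕ) :
    Summable (fterm u r h) := by
  obtain ⟨c, hc0, hc1, hc⟩ := exists_bound hu_sum hu_abs hpos
  refine Summable.of_nonneg_of_le (fterm_nonneg hr01 hpos h) ?_
    (summable_geometric_of_lt_one hc0 hc1)
  · intro k
    unfold fterm
    calc r (h k) * ∏ i ∈ Finset.range k, u (h i) ≤ 1 * ∏ i ∈ Finset.range k, u (h i) := by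
          apply mul_le_mul_of_nonneg_right (le_of_lt (hr01 _).2)
          exact Finset.prod_nonneg fun i _ => hpos _
      _ = ∏ i ∈ Finset.range k, u (h i) := one_mul _
      _ ≤ ∏ _i ∈ Finset.range k, c :=
          Finset.prod_le_prod (fun i _ => hpos _) (fun i _ => hc _)
      _ = c ^ k := by rw [Finset.prod_const, Finset.card_range]

lemma fSeries_eq_tsum (hu_sum : Summable u) (hu_abs : ∀ n, |u n| < 1)
    (hr01 : ∀ n, 0 < r n ∧ r n < 1) (hpos : ∀ n, 0 ≤ u n) (h : ℕ → ℕ) :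
    fSeries' u r h = ∑' k, fterm u r h k := by
  rw [Summable.tsum_eq_zero_add (summable_fterm hu_sum hu_abs hr01 hpos h)]
  unfold fSeries' fterm
  simp

lemma r_step (hr : ∀ n, r n = 1 - ∑ i ∈ Finset.range (n + 1), u i) (j : ℕ) :
    r j = r (j + 1) + u (j + 1) := by
  have h2 : ∑ i ∈ Finset.range (j + 1 + 1), u i
      = ∑ i ∈ Finset.range (j + 1), u i + u (j + 1) := Finset.sum_range_succ u (j + 1)
  rw [hr j, hr (j + 1), h2]
  ring

variable (hu_sum : Summable u) (hu_abs : ∀ n, |u n| < 1)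
  (hr01 : ∀ n, 0 < r n ∧ r n < 1) (hpos : ∀ n, 0 ≤ u n)
  (hr : ∀ n, r n = 1 - ∑ i ∈ Finset.range (n + 1), u i)

include hu_sum hu_abs hr01 hpos hr

lemma fval_bseq (g : ℕ → ℕ) (n : ℕ) :
    fSeries' u r (bseq g n) = (∑ k ∈ Finset.range (n + 1), fterm u r g k) + Pu u g (n + 1) := by
  have hu01 : u 0 < 1 := lt_of_le_of_lt (le_abs_self _) (hu_abs 0)
  have hu00 : (0:ℝ) ≤ u 0 := hpos 0
  have hr0 : r 0 = 1 - u 0 := by rw [hr 0, Finset.sum_range_one]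
  rw [fSeries_eq_tsum hu_sum hu_abs hr01 hpos,
    ← Summable.sum_add_tsum_nat_add (n + 1) (summable_fterm hu_sum hu_abs hr01 hpos _)]
  congr 1
  · apply Finset.sum_congr rfl
    intro k hk
    have hkn := Finset.mem_range.mp hk
    unfold fterm
    rw [bseq_prefix g n k (by omega)]
    congr 1
    apply Finset.prod_congr rfl
    intro i hi
    have := Finset.mem_range.mp hi
    rw [bseq_prefix g n i (by omega)]
  · have hterm : ∀ m, fterm u r (bseq g n) (m + (n + 1))
        = (r 0 * Pu u g (n + 1)) * u 0 ^ m := by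
      intro m
      unfold fterm Pu
      have h1 : bseq g n (m + (n + 1)) = 0 := if_neg (by omega)
      rw [h1, show m + (n + 1) = (n + 1) + m by omega, Finset.prod_range_add]
      have h2 : ∀ i ∈ Finset.range (n + 1), u (bseq g n i) = u (g i) := fun i hi => by
        rw [bseq_prefix g n i (by have := Finset.mem_range.mp hi; omega)]
      have h3 : ∀ i ∈ Finset.range m, u (bseq g n (n + 1 + i)) = u 0 := fun i _ => by
        rw [show bseq g n (n + 1 + i) = 0 from if_neg (by omega)]
      rw [Finset.prod_congr rfl h2, Finset.prod_congr rfl h3, Finset.prod_const,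
        Finset.card_range]
      ring
    calc (∑' m, fterm u r (bseq g n) (m + (n + 1)))
        = ∑' m, (r 0 * Pu u g (n + 1)) * u 0 ^ m := tsum_congr hterm
      _ = (r 0 * Pu u g (n + 1)) * (1 - u 0)⁻¹ := by
          rw [tsum_mul_left, tsum_geometric_of_lt_one hu00 hu01]
      _ = Pu u g (n + 1) := by
          rw [hr0]
          have : (1:ℝ) - u 0 ≠ 0 := by linarith
          field_simp

lemma fval_aseq (g : ℕ → ℕ) (n : ℕ) :
    fSeries' u r (aseq g n)
      = (∑ k ∈ Finset.range n, fterm u r g k) + Pu u g n * (r (g n + 1) + u (g n + 1)) := by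
  have hu01 : u 0 < 1 := lt_of_le_of_lt (le_abs_self _) (hu_abs 0)
  have hu00 : (0:ℝ) ≤ u 0 := hpos 0
  have hr0 : r 0 = 1 - u 0 := by rw [hr 0, Finset.sum_range_one]
  rw [fSeries_eq_tsum hu_sum hu_abs hr01 hpos,
    ← Summable.sum_add_tsum_nat_add n (summable_fterm hu_sum hu_abs hr01 hpos _)]
  congr 1
  · apply Finset.sum_congr rfl
    intro k hk
    have hkn := Finset.mem_range.mp hk
    unfold fterm
    have ha : aseq g n k = g k := if_pos hkn
    rw [ha]
    congr 1
    apply Finset.prod_congr rfl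
    intro i hi
    have := Finset.mem_range.mp hi
    rw [show aseq g n i = g i from if_pos (by omega)]
  · have hsum : Summable fun m => fterm u r (aseq g n) (m + n) :=
      (summable_nat_add_iff n).mpr (summable_fterm hu_sum hu_abs hr01 hpos _)
    rw [Summable.tsum_eq_zero_add hsum]
    have h0 : fterm u r (aseq g n) (0 + n) = r (g n + 1) * Pu u g n := by
      unfold fterm Pu
      rw [zero_add]
      have ha : aseq g n n = g n + 1 := by simp [aseq]
      rw [ha]
      congr 1
      apply Finset.prod_congr rfl
      intro i hi
      have := Finset.mem_range.mp hi
      rw [show aseq g n i = g i from if_pos (by omega)]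
    have hterm : ∀ m, fterm u r (aseq g n) (m + 1 + n)
        = (r 0 * (Pu u g n * u (g n + 1))) * u 0 ^ m := by
      intro m
      unfold fterm Pu
      have h1 : aseq g n (m + 1 + n) = 0 := by
        rw [aseq, if_neg (by omega), if_neg (by omega)]
      rw [h1, show m + 1 + n = n + (1 + m) by omega, Finset.prod_range_add,
        Finset.prod_range_add]
      have h2 : ∀ i ∈ Finset.range n, u (aseq g n i) = u (g i) := fun i hi => by
        rw [show aseq g n i = g i from if_pos (Finset.mem_range.mp hi)]
      have h3 : ∀ i ∈ Finset.range m, u (aseq g n (n + (1 + i))) = u 0 := fun i _ => by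
        rw [show aseq g n (n + (1 + i)) = 0 by rw [aseq, if_neg (by omega), if_neg (by omega)]]
      have h4 : ∏ i ∈ Finset.range 1, u (aseq g n (n + i)) = u (g n + 1) := by
        rw [Finset.prod_range_one, show aseq g n (n + 0) = g n + 1 by simp [aseq]]
      rw [Finset.prod_congr rfl h2, h4, Finset.prod_congr rfl h3, Finset.prod_const,
        Finset.card_range]
      ring
    calc fterm u r (aseq g n) (0 + n) + ∑' m, fterm u r (aseq g n) (m + 1 + n)
        = r (g n + 1) * Pu u g n
          + ∑' m, (r 0 * (Pu u g n * u (g n + 1))) * u 0 ^ m := by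
          rw [h0]; congr 1; exact tsum_congr hterm
      _ = r (g n + 1) * Pu u g n
          + (r 0 * (Pu u g n * u (g n + 1))) * (1 - u 0)⁻¹ := by
          rw [tsum_mul_left, tsum_geometric_of_lt_one hu00 hu01]
      _ = Pu u g n * (r (g n + 1) + u (g n + 1)) := by
          rw [hr0]
          have : (1:ℝ) - u 0 ≠ 0 := by linarith
          field_simp

/-- the f-increment across the rank-`n+1` cylinder containing `x` -/
lemma fdiff (g : ℕ → ℕ) (n : ℕ) :
    fSeries' u r (bseq g n) - fSeries' u r (aseq g n) = Pu u g (n + 1) := by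
  rw [fval_bseq hu_sum hu_abs hr01 hpos hr, fval_aseq hu_sum hu_abs hr01 hpos hr,
    Finset.sum_range_succ]
  have h1 : fterm u r g n = r (g n) * Pu u g n := rfl
  have h2 : Pu u g (n + 1) = Pu u g n * u (g n) := Finset.prod_range_succ _ _
  rw [h1, h2, r_step hr (g n)]
  ring

end FSeries

/-- difference quotients over bracketing intervals converge to the derivative -/
lemma slope_tendsto {f : ℝ → ℝ} {t d : ℝ} (hd : HasDerivAt f d t) {a b : ℕ → ℝ}
    (ha : ∀ n, a n < t) (hb : ∀ n, t ≤ b n)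
    (hab : Tendsto (fun n => b n - a n) atTop (nhds 0)) :
    Tendsto (fun n => (f (b n) - f (a n)) / (b n - a n)) atTop (nhds d) := by
  have hat : Tendsto a atTop (nhds t) := by
    have h1 : Tendsto (fun n => t - (b n - a n)) atTop (nhds (t - 0)) :=
      tendsto_const_nhds.sub hab
    rw [sub_zero] at h1
    apply tendsto_of_tendsto_of_tendsto_of_le_of_le h1 tendsto_const_nhds
    · intro n; have := hb n; simp only; linarith
    · intro n; exact le_of_lt (ha n)
  have hbt : Tendsto b atTop (nhds t) := by
    have h1 : Tendsto (fun n => t + (b n - a n)) atTop (nhds (t + 0)) :=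
      tendsto_const_nhds.add hab
    rw [add_zero] at h1
    apply tendsto_of_tendsto_of_tendsto_of_le_of_le tendsto_const_nhds h1 hb
    intro n; have := ha n; simp only; linarith
  rw [Metric.tendsto_atTop]
  intro ε hε
  have hlo := (hasDerivAt_iff_isLittleO.mp hd).def (show (0:ℝ) < ε/4 by linarith)
  have hA := hat.eventually hlo
  have hB := hbt.eventually hlo
  rw [Filter.eventually_atTop] at hA hB
  obtain ⟨N1, hN1⟩ := hA
  obtain ⟨N2, hN2⟩ := hB
  refine ⟨max N1 N2, fun n hn => ?_⟩
  have h1 := hN1 n (le_trans (le_max_left _ _) hn)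
  have h2 := hN2 n (le_trans (le_max_right _ _) hn)
  simp only [Real.norm_eq_abs, smul_eq_mul] at h1 h2
  have hAB : 0 < b n - a n := by have := ha n; have := hb n; linarith
  have habs1 : |b n - t| = b n - t := abs_of_nonneg (by have := hb n; linarith)
  have habs2 : |a n - t| = t - a n := by
    rw [abs_of_nonpos (by have := ha n; linarith)]; ring
  rw [habs1] at h2
  rw [habs2] at h1
  have key : |f (b n) - f (a n) - (b n - a n) * d| ≤ ε / 2 * (b n - a n) := by
    have e3 : f (b n) - f (a n) - (b n - a n) * d
        = (f (b n) - f t - (b n - t) * d) - (f (a n) - f t - (a n - t) * d) := by ring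
    rw [e3]
    calc |(f (b n) - f t - (b n - t) * d) - (f (a n) - f t - (a n - t) * d)|
        ≤ |f (b n) - f t - (b n - t) * d| + |f (a n) - f t - (a n - t) * d| := abs_sub _ _
      _ ≤ ε / 4 * (b n - t) + ε / 4 * (t - a n) := add_le_add h2 h1
      _ ≤ ε / 2 * (b n - a n) := by have := ha n; have := hb n; nlinarith
  rw [Real.dist_eq]
  have e4 : (f (b n) - f (a n)) / (b n - a n) - d
      = (f (b n) - f (a n) - (b n - a n) * d) / (b n - a n) := by
    field_simp
  rw [e4, abs_div, abs_of_pos hAB, div_lt_iff₀ hAB]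
  calc |f (b n) - f (a n) - (b n - a n) * d| ≤ ε / 2 * (b n - a n) := key
    _ < ε * (b n - a n) := by nlinarith

/-- any Engel sum lies in its rank-`n+1` cylinder interval -/
lemma engel_self_mem (g : ℕ → ℕ) (n : ℕ) :
    engelSum g ∈ Set.Ioc (A g (n+1)) (A g (n+1) + Lp g (n+1) * ((q g n : ℝ) - 1)⁻¹) := by
  have hq0 : q (tailSeq g (n+1)) 0 = q g (n+1) := by
    rw [q_tailSeq]
  constructor
  · rw [engel_split g (n+1)]
    have := mul_pos (Lp_pos g (n+1)) (engelSum_pos (tailSeq g (n+1)))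
    linarith
  · rw [engel_split g (n+1)]
    have h1 : engelSum (tailSeq g (n+1)) ≤ ((q g n : ℝ) - 1)⁻¹ := by
      calc engelSum (tailSeq g (n+1)) ≤ ((q (tailSeq g (n+1)) 0 : ℝ) - 1)⁻¹ := engelSum_le _
        _ ≤ ((q g n : ℝ) - 1)⁻¹ := by
            rw [hq0]
            apply inv_anti₀ (qr_sub_one_pos g n)
            have : q g n ≤ q g (n+1) := q_mono g (by omega)
            have : (q g n : ℝ) ≤ (q g (n+1) : ℝ) := by exact_mod_cast this
            linarith
    have := mul_le_mul_of_nonneg_left h1 (le_of_lt (Lp_pos g (n+1)))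
    linarith

lemma cyl_subset_Ioc (G : ℝ → ℕ → ℕ)
    (hG : ∀ x ∈ Set.Ioc (0:ℝ) 1, engelSum (G x) = x) (p : ℕ → ℕ) (n : ℕ) :
    {x : ℝ | x ∈ Set.Ioc (0:ℝ) 1 ∧ ∀ i, i ≤ n → G x i = p i}
      ⊆ Set.Ioc (A p (n+1)) (A p (n+1) + Lp p (n+1) * ((q p n : ℝ) - 1)⁻¹) := by
  rintro x ⟨hx, hdig⟩
  have hx' : engelSum (G x) = x := hG x hx
  have hmem := engel_self_mem (G x) n
  rw [hx'] at hmem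
  rwa [A_congr hdig, Lp_congr hdig, q_congr hdig (le_refl n)] at hmem

/-- the bad-ratio condition at level `m` for the digit sequence `g` -/
def badCond (u : ℕ → ℝ) (ε : ℝ) (g : ℕ → ℕ) (m : ℕ) : Prop :=
  |u (g (m+1)) * ((q g (m+1) : ℝ) * ((q g (m+1) : ℝ) - 1) / ((q g m : ℝ) - 1)) - 1| ≤ ε

set_option maxHeartbeats 1600000 in
/-- key measure estimate: the set of points all whose ratios from level `n` to `n+k`
are `ε`-good has measure at most `ρ^k` times the cylinder length. -/
lemma measure_key (u : ℕ → ℝ) (G : ℝ → ℕ → ℕ)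
    (hG : ∀ x ∈ Set.Ioc (0:ℝ) 1, engelSum (G x) = x)
    (husum : Summable u) (hpos : ∀ n, 0 ≤ u n) (hu01 : u 0 < 1)
    (htsum : ∑' j, u (j + 1) = 1 - u 0)
    (ε : ℝ) (hε : 0 < ε) (hε1 : ε < 1) :
    ∀ (k : ℕ) (p : ℕ → ℕ) (n : ℕ), (1 + ε) < u 0 * (q p n : ℝ) →
    volume {x : ℝ | (x ∈ Set.Ioc (0:ℝ) 1 ∧ ∀ i, i ≤ n → G x i = p i) ∧
        ∀ m, n ≤ m → m < n + k → badCond u ε (G x) m}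
      ≤ ENNReal.ofReal (((1 - u 0) * (1 - ε)⁻¹)^k * (Lp p (n+1) * ((q p n : ℝ) - 1)⁻¹)) := by
  classical
  intro k
  induction k with
  | zero =>
    intro p n _
    calc volume {x : ℝ | (x ∈ Set.Ioc (0:ℝ) 1 ∧ ∀ i, i ≤ n → G x i = p i) ∧
            ∀ m, n ≤ m → m < n + 0 → badCond u ε (G x) m}
        ≤ volume (Set.Ioc (A p (n+1)) (A p (n+1) + Lp p (n+1) * ((q p n : ℝ) - 1)⁻¹)) := by
          apply measure_mono
          intro x hx
          exact cyl_subset_Ioc G hG p n hx.1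
      _ = ENNReal.ofReal (((1 - u 0) * (1 - ε)⁻¹)^0 * (Lp p (n+1) * ((q p n : ℝ) - 1)⁻¹)) := by
          rw [Real.volume_Ioc, pow_zero, one_mul]
          congr 1
          ring
  | succ k ih =>
    intro p n hqp
    have hu00 : (0:ℝ) ≤ u 0 := hpos 0
    have hqp1 : (1:ℝ) < (q p n : ℝ) := one_lt_qr p n
    have hLpos : 0 < Lp p (n+1) := Lp_pos p (n+1)
    have hqs : (0:ℝ) < (q p n : ℝ) - 1 := qr_sub_one_pos p n
    have h1ε : (0:ℝ) < 1 - ε := by linarith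
    have hu0lt : (0:ℝ) ≤ 1 - u 0 := by linarith
    set ρ : ℝ := (1 - u 0) * (1 - ε)⁻¹ with hρdef
    have hρ0 : 0 ≤ ρ := mul_nonneg hu0lt (inv_nonneg.2 (le_of_lt h1ε))
    set S : Set ℝ := {x : ℝ | (x ∈ Set.Ioc (0:ℝ) 1 ∧ ∀ i, i ≤ n → G x i = p i) ∧
        ∀ m, n ≤ m → m < n + (k+1) → badCond u ε (G x) m} with hSdef
    -- allowed digits
    set Al : ℕ → Prop := fun j =>
      |u j * (((q p n : ℝ) + j) * (((q p n : ℝ) + j) - 1) / ((q p n : ℝ) - 1)) - 1| ≤ ε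
      with hAldef
    have hAl0 : ¬ Al 0 := by
      intro h
      simp only [hAldef, Nat.cast_zero, add_zero] at h
      rw [mul_div_assoc, div_self (ne_of_gt hqs), mul_one] at h
      have := (abs_le.mp h).2
      linarith
    -- slices
    set Sl : ℕ → Set ℝ := fun j => S ∩ {x : ℝ | G x (n+1) = j} with hSldef
    have hcover : S ⊆ ⋃ j : ℕ, Sl j := by
      intro x hx
      exact Set.mem_iUnion.2 ⟨G x (n+1), hx, rfl⟩
    -- digit bookkeeping inside a slice
    have hqGx : ∀ x ∈ S, q (G x) n = q p n := by
      rintro x ⟨⟨_, hdig⟩, _⟩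
      exact q_congr hdig (le_refl n)
    have hqGx1 : ∀ x ∈ S, ∀ j, G x (n+1) = j → q (G x) (n+1) = q p n + j := by
      intro x hx j hj
      rw [q_succ, hqGx x hx, hj]
    -- allowedness of nonempty slices
    have hAl_of_mem : ∀ j, ∀ x ∈ Sl j, Al j := by
      rintro j x ⟨hxS, hxj⟩
      obtain ⟨⟨hIoc, hdig⟩, hbad⟩ := hxS
      have hb := hbad n (le_refl n) (by omega)
      unfold badCond at hb
      rw [hqGx1 x ⟨⟨hIoc, hdig⟩, hbad⟩ j hxj, hqGx x ⟨⟨hIoc, hdig⟩, hbad⟩, hxj] at hb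
      rw [hAldef]
      simp only
      have hc : ((q p n + j : ℕ) : ℝ) = (q p n : ℝ) + j := by push_cast; ring
      rwa [hc] at hb
    -- real-valued bounds
    set w : ℕ → ℝ := fun j => if Al j then
        ρ^k * Lp p (n+1) * (1 / ((((q p n : ℝ) + j)) * (((q p n : ℝ) + j) - 1))) else 0
      with hwdef
    set v : ℕ → ℝ := fun j => if j = 0 then 0 else
        ρ^k * Lp p (n+1) * (u j / ((1 - ε) * ((q p n : ℝ) - 1)))
      with hvdef
    have hρLp : 0 ≤ ρ^k * Lp p (n+1) := mul_nonneg (pow_nonneg hρ0 k) (le_of_lt hLpos)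
    have hw0 : ∀ j, 0 ≤ w j := by
      intro j
      rw [hwdef]
      simp only
      split
      · apply mul_nonneg hρLp
        apply le_of_lt
        apply div_pos one_pos
        have hj0 : (0:ℝ) ≤ (j:ℕ) := Nat.cast_nonneg j
        apply mul_pos <;> nlinarith
      · exact le_refl 0
    have hv0 : ∀ j, 0 ≤ v j := by
      intro j
      rw [hvdef]
      simp only
      split
      · exact le_refl 0
      · exact mul_nonneg hρLp (div_nonneg (hpos j) (le_of_lt (mul_pos h1ε hqs)))
    have hwv : ∀ j, w j ≤ v j := by
      intro j
      rcases Nat.eq_zero_or_pos j with hj | hj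
      · subst hj
        simp only [hwdef, hvdef]
        rw [if_neg hAl0]
        simp
      · rw [hwdef, hvdef]
        simp only [if_neg (by omega : j ≠ 0)]
        split
        next hAl =>
          apply mul_le_mul_of_nonneg_left _ hρLp
          have hj1 : (1:ℝ) ≤ (j : ℝ) := by exact_mod_cast hj
          have hx1 : (0:ℝ) < ((q p n : ℝ) + j) := by nlinarith
          have hx2 : (0:ℝ) < ((q p n : ℝ) + j) - 1 := by nlinarith
          have h5 : 1 - ε ≤ u j * (((q p n : ℝ) + j) * (((q p n : ℝ) + j) - 1) / ((q p n : ℝ) - 1)) := by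
            have := (abs_le.mp hAl).1
            linarith
          rw [mul_div_assoc'] at h5
          have h6 := (le_div_iff₀ hqs).mp h5
          rw [div_le_div_iff₀ (mul_pos hx1 hx2) (mul_pos h1ε hqs)]
          nlinarith
        next => exact mul_nonneg hρLp (div_nonneg (hpos j) (le_of_lt (mul_pos h1ε hqs)))
    have hsumv : Summable v := by
      refine Summable.of_nonneg_of_le hv0 ?_
        (husum.mul_left (ρ^k * Lp p (n+1) * ((1 - ε) * ((q p n : ℝ) - 1))⁻¹))
      intro j
      simp only [hvdef]
      split
      · apply mul_nonneg (mul_nonneg hρLp (inv_nonneg.2 (le_of_lt (mul_pos h1ε hqs)))) (hpos j)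
      · exact le_of_eq (by rw [div_eq_mul_inv]; ring)
    have hsumw : Summable w := Summable.of_nonneg_of_le hw0 hwv hsumv
    -- the per-slice measure bound
    have hslice : ∀ j : ℕ, volume (Sl j) ≤ ENNReal.ofReal (w j) := by
      intro j
      by_cases hAl : Al j
      · -- use the inductive hypothesis with the updated prefix
        set p' : ℕ → ℕ := Function.update p (n+1) j with hp'def
        have hdig' : ∀ i, i ≤ n → p' i = p i := by
          intro i hi
          rw [hp'def]
          exact Function.update_of_ne (by omega) _ _
        have hq' : q p' (n+1) = q p n + j := by
          rw [q_succ, q_congr (fun i hi => hdig' i hi) (le_refl n), hp'def,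
            Function.update_self]
        have hsub : Sl j ⊆ {x : ℝ | (x ∈ Set.Ioc (0:ℝ) 1 ∧ ∀ i, i ≤ n+1 → G x i = p' i) ∧
            ∀ m, n+1 ≤ m → m < (n+1) + k → badCond u ε (G x) m} := by
          rintro x ⟨⟨⟨hIoc, hdig⟩, hbad⟩, hxj⟩
          refine ⟨⟨hIoc, ?_⟩, ?_⟩
          · intro i hi
            rcases Nat.lt_or_ge i (n+1) with h | h
            · rw [hdig' i (by omega)]
              exact hdig i (by omega)
            · have : i = n + 1 := by omega
              subst this
              rw [hp'def, Function.update_self]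
              exact hxj
          · intro m hm1 hm2
            exact hbad m (by omega) (by omega)
        have hcond : (1 + ε) < u 0 * (q p' (n+1) : ℝ) := by
          rw [hq']
          have : (q p n : ℝ) ≤ ((q p n + j : ℕ) : ℝ) := by
            push_cast; have : (0:ℝ) ≤ (j:ℝ) := Nat.cast_nonneg j; linarith
          nlinarith
        calc volume (Sl j) ≤ _ := measure_mono hsub
          _ ≤ ENNReal.ofReal (ρ^k * (Lp p' (n+1+1) * ((q p' (n+1) : ℝ) - 1)⁻¹)) :=
              ih p' (n+1) hcond
          _ = ENNReal.ofReal (w j) := by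
              congr 1
              rw [hwdef]
              simp only [if_pos hAl]
              rw [Lp_succ, Lp_congr (fun i hi => hdig' i hi), hq']
              have hc : ((q p n + j : ℕ) : ℝ) = (q p n : ℝ) + j := by push_cast; ring
              rw [hc]
              have hx1 : ((q p n : ℝ) + j) ≠ 0 := by
                have : (0:ℝ) ≤ (j:ℝ) := Nat.cast_nonneg j
                nlinarith
              have hx2 : ((q p n : ℝ) + j) - 1 ≠ 0 := by
                have : (0:ℝ) ≤ (j:ℝ) := Nat.cast_nonneg j
                nlinarith
              field_simp
      · -- slice is empty
        have : Sl j = ∅ := by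
          rw [Set.eq_empty_iff_forall_notMem]
          intro x hx
          exact hAl (hAl_of_mem j x hx)
        rw [this]
        simp [hw0 j]
    -- summing up
    have htsum_wv : ∑' j, w j ≤ ρ^(k+1) * (Lp p (n+1) * ((q p n : ℝ) - 1)⁻¹) := by
      have h1 : ∑' j, w j ≤ ∑' j, v j := Summable.tsum_le_tsum hwv hsumw hsumv
      have h2 : ∑' j, v j = ρ^(k+1) * (Lp p (n+1) * ((q p n : ℝ) - 1)⁻¹) := by
        rw [Summable.tsum_eq_zero_add hsumv]
        have hv00 : v 0 = 0 := by simp [hvdef]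
        have hvs : ∀ j : ℕ, v (j + 1)
            = (ρ^k * Lp p (n+1) * (((1 - ε) * ((q p n : ℝ) - 1)))⁻¹) * u (j+1) := by
          intro j
          rw [hvdef]
          simp only [if_neg (Nat.succ_ne_zero j)]
          rw [div_eq_mul_inv]
          ring
        calc v 0 + ∑' j, v (j+1)
            = ∑' j, (ρ^k * Lp p (n+1) * (((1 - ε) * ((q p n : ℝ) - 1)))⁻¹) * u (j+1) := by
              rw [hv00, zero_add]
              exact tsum_congr hvs
          _ = (ρ^k * Lp p (n+1) * (((1 - ε) * ((q p n : ℝ) - 1)))⁻¹) * (1 - u 0) := by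
              rw [tsum_mul_left, htsum]
          _ = ρ^(k+1) * (Lp p (n+1) * ((q p n : ℝ) - 1)⁻¹) := by
              rw [pow_succ, hρdef, mul_inv]
              ring
      linarith
    calc volume S ≤ volume (⋃ j : ℕ, Sl j) := measure_mono hcover
      _ ≤ ∑' j : ℕ, volume (Sl j) := measure_iUnion_le _
      _ ≤ ∑' j : ℕ, ENNReal.ofReal (w j) := ENNReal.tsum_le_tsum hslice
      _ = ENNReal.ofReal (∑' j, w j) := (ENNReal.ofReal_tsum_of_nonneg hw0 hsumw).symm
      _ ≤ ENNReal.ofReal (ρ^(k+1) * (Lp p (n+1) * ((q p n : ℝ) - 1)⁻¹)) :=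
          ENNReal.ofReal_le_ofReal htsum_wv

set_option maxHeartbeats 1600000 in
lemma bad_null (u : ℕ → ℝ) (G : ℝ → ℕ → ℕ)
    (hG : ∀ x ∈ Set.Ioc (0:ℝ) 1, engelSum (G x) = x)
    (husum : Summable u) (hpos : ∀ n, 0 ≤ u n) (hu01 : u 0 < 1)
    (htsum : ∑' j, u (j + 1) = 1 - u 0)
    (ε : ℝ) (hε : 0 < ε) (hε1 : ε < 1) (hεu : ε < u 0) (N : ℕ) :
    volume {x : ℝ | x ∈ Set.Ioc (0:ℝ) 1 ∧ (1 + ε) < u 0 * (q (G x) N : ℝ) ∧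
      ∀ m, N ≤ m → badCond u ε (G x) m} = 0 := by
  classical
  set ρ : ℝ := (1 - u 0) * (1 - ε)⁻¹ with hρdef
  have h1ε : (0:ℝ) < 1 - ε := by linarith
  have hρ0 : 0 ≤ ρ := mul_nonneg (by linarith) (inv_nonneg.2 (le_of_lt h1ε))
  have hρ1 : ρ < 1 := by
    rw [hρdef, ← div_eq_mul_inv, div_lt_one h1ε]
    linarith
  -- extension of a finite string to ℕ → ℕ
  set ext : (Fin (N+1) → ℕ) → (ℕ → ℕ) := fun σ i => if h : i < N + 1 then σ ⟨i, h⟩ else 0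
    with hextdef
  set T : (Fin (N+1) → ℕ) → Set ℝ := fun σ =>
    {x : ℝ | (1 + ε) < u 0 * (q (ext σ) N : ℝ) ∧
      ((x ∈ Set.Ioc (0:ℝ) 1 ∧ ∀ i, i ≤ N → G x i = ext σ i) ∧
        ∀ m, N ≤ m → badCond u ε (G x) m)} with hTdef
  have hsub : {x : ℝ | x ∈ Set.Ioc (0:ℝ) 1 ∧ (1 + ε) < u 0 * (q (G x) N : ℝ) ∧
      ∀ m, N ≤ m → badCond u ε (G x) m} ⊆ ⋃ σ, T σ := by
    intro x ⟨hIoc, hq, hbad⟩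
    refine Set.mem_iUnion.2 ⟨fun i => G x i, ?_, ⟨hIoc, ?_⟩, hbad⟩
    · have : q (ext fun i => G x (i : ℕ)) N = q (G x) N := by
        apply q_congr _ (le_refl N)
        intro i hi
        simp only [hextdef]
        rw [dif_pos (by omega)]
      rw [this]
      exact hq
    · intro i hi
      simp only [hextdef]
      rw [dif_pos (by omega)]
  have hTnull : ∀ σ, volume (T σ) = 0 := by
    intro σ
    by_cases hc : (1 + ε) < u 0 * (q (ext σ) N : ℝ)
    · have hbound : ∀ k : ℕ, volume (T σ)
          ≤ ENNReal.ofReal (ρ^k * (Lp (ext σ) (N+1) * ((q (ext σ) N : ℝ) - 1)⁻¹)) := by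
        intro k
        refine le_trans (measure_mono ?_)
          (measure_key u G hG husum hpos hu01 htsum ε hε hε1 k (ext σ) N hc)
        rintro x ⟨_, ⟨hIoc, hdig⟩, hbad⟩
        exact ⟨⟨hIoc, hdig⟩, fun m hm _ => hbad m hm⟩
      have hlim : Tendsto
          (fun k : ℕ => ENNReal.ofReal (ρ^k * (Lp (ext σ) (N+1) * ((q (ext σ) N : ℝ) - 1)⁻¹)))
          atTop (nhds 0) := by
        have h1 : Tendsto (fun k : ℕ => ρ^k * (Lp (ext σ) (N+1) * ((q (ext σ) N : ℝ) - 1)⁻¹))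
            atTop (nhds 0) := by
          have := (tendsto_pow_atTop_nhds_zero_of_lt_one hρ0 hρ1).mul_const
            (Lp (ext σ) (N+1) * ((q (ext σ) N : ℝ) - 1)⁻¹)
          rwa [zero_mul] at this
        have h2 := (ENNReal.continuous_ofReal.tendsto 0).comp h1
        rwa [ENNReal.ofReal_zero] at h2
      have := ge_of_tendsto' hlim hbound
      exact le_antisymm this zero_le
    · have : T σ = ∅ := by
        rw [Set.eq_empty_iff_forall_notMem]
        rintro x ⟨hq, _⟩
        exact hc hq
      rw [this, measure_empty]
  refine le_antisymm ?_ zero_le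
  calc volume {x : ℝ | x ∈ Set.Ioc (0:ℝ) 1 ∧ (1 + ε) < u 0 * (q (G x) N : ℝ) ∧
        ∀ m, N ≤ m → badCond u ε (G x) m}
      ≤ volume (⋃ σ, T σ) := measure_mono hsub
    _ ≤ ∑' σ, volume (T σ) := measure_iUnion_le _
    _ ≤ 0 := by simp [hTnull]

lemma T0_countable (G : ℝ → ℕ → ℕ)
    (hG : ∀ x ∈ Set.Ioc (0:ℝ) 1, engelSum (G x) = x) :
    Set.Countable {x : ℝ | x ∈ Set.Ioc (0:ℝ) 1 ∧ ∃ N, ∀ m, N ≤ m → G x m = 0} := by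
  have : {x : ℝ | x ∈ Set.Ioc (0:ℝ) 1 ∧ ∃ N, ∀ m, N ≤ m → G x m = 0}
      = ⋃ N : ℕ, {x : ℝ | x ∈ Set.Ioc (0:ℝ) 1 ∧ ∀ m, N ≤ m → G x m = 0} := by
    ext x
    simp only [Set.mem_iUnion, Set.mem_setOf_eq]
    constructor
    · rintro ⟨h1, N, h2⟩; exact ⟨N, h1, h2⟩
    · rintro ⟨N, h1, h2⟩; exact ⟨h1, N, h2⟩
  rw [this]
  apply Set.countable_iUnion
  intro N
  have hrange : Set.Countable (Set.range (fun σ : Fin N → ℕ =>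
      engelSum (fun i => if h : i < N then σ ⟨i, h⟩ else 0))) := Set.countable_range _
  apply Set.Countable.mono _ hrange
  rintro x ⟨hIoc, hzero⟩
  refine ⟨fun i => G x i, ?_⟩
  show engelSum (fun i => if h : i < N then G x ((⟨i, h⟩ : Fin N) : ℕ) else 0) = x
  have hfun : (fun i => if h : i < N then G x ((⟨i, h⟩ : Fin N) : ℕ) else 0) = G x := by
    funext i
    by_cases h : i < N
    · simp [h]
    · rw [dif_neg h]
      exact (hzero i (by omega)).symm
  rw [hfun]
  exact hG x hIoc

set_option maxHeartbeats 1600000 in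
lemma pointwise (u r : ℕ → ℝ) (G : ℝ → ℕ → ℕ) (f : ℝ → ℝ)
    (husum : Summable u) (hu_abs : ∀ n, |u n| < 1)
    (hr : ∀ n, r n = 1 - ∑ i ∈ Finset.range (n + 1), u i)
    (hr01 : ∀ n, 0 < r n ∧ r n < 1) (hpos : ∀ n, 0 ≤ u n)
    (hG : ∀ x ∈ Set.Ioc (0:ℝ) 1, engelSum (G x) = x)
    (hGuniq : ∀ x ∈ Set.Ioc (0:ℝ) 1, ∀ g : ℕ → ℕ, engelSum g = x → g = G x)
    (hf : ∀ x ∈ Set.Ioc (0:ℝ) 1, f x = fSeries' u r (G x))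
    (ε : ℝ) (hε : 0 < ε) (hu0 : 0 < u 0)
    (t : ℝ) (ht : t ∈ Set.Ioo (0:ℝ) 1)
    (hdiff : DifferentiableAt ℝ f t) (hderiv : deriv f t ≠ 0) :
    (∃ N, ∀ m, N ≤ m → G t m = 0) ∨
      (∃ N, (1 + ε) < u 0 * (q (G t) N : ℝ) ∧ ∀ m, N ≤ m → badCond u ε (G t) m) := by
  by_cases hT0 : ∃ N, ∀ m, N ≤ m → G t m = 0
  · exact Or.inl hT0
  right
  push_neg at hT0
  have htIoc : t ∈ Set.Ioc (0:ℝ) 1 := ⟨ht.1, le_of_lt ht.2⟩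
  have hengel : engelSum (G t) = t := hG t htIoc
  set g : ℕ → ℕ := G t with hgdef
  have hmem : ∀ n, A g (n+1) < t
      ∧ t ≤ A g (n+1) + Lp g (n+1) * ((q g n : ℝ) - 1)⁻¹ := by
    intro n
    have h1 := engel_self_mem g n
    rw [hengel] at h1
    exact ⟨h1.1, h1.2⟩
  have hbapos : ∀ n, (0:ℝ) < Lp g (n+1) * ((q g n : ℝ) - 1)⁻¹ :=
    fun n => mul_pos (Lp_pos g (n+1)) (inv_pos.2 (qr_sub_one_pos g n))
  have haIoc : ∀ n, A g (n+1) ∈ Set.Ioc (0:ℝ) 1 := by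
    intro n
    constructor
    · unfold A
      apply Finset.sum_pos (fun k _ => term_pos g k)
      exact Finset.nonempty_range_iff.2 (Nat.succ_ne_zero n)
    · exact le_trans (le_of_lt (hmem n).1) htIoc.2
  have hbIoc : ∀ n, A g (n+1) + Lp g (n+1) * ((q g n : ℝ) - 1)⁻¹ ∈ Set.Ioc (0:ℝ) 1 := by
    intro n
    rw [← engel_bseq g n]
    exact ⟨engelSum_pos _, engelSum_le_one _⟩
  have hfa : ∀ n, f (A g (n+1)) = fSeries' u r (aseq g n) := by
    intro n
    rw [hf _ (haIoc n)]
    congr 1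
    exact (hGuniq _ (haIoc n) (aseq g n) (engel_aseq g n)).symm
  have hfb : ∀ n, f (A g (n+1) + Lp g (n+1) * ((q g n : ℝ) - 1)⁻¹)
      = fSeries' u r (bseq g n) := by
    intro n
    rw [hf _ (hbIoc n)]
    congr 1
    exact (hGuniq _ (hbIoc n) (bseq g n) (engel_bseq g n)).symm
  have hslopeval : ∀ n, f (A g (n+1) + Lp g (n+1) * ((q g n : ℝ) - 1)⁻¹) - f (A g (n+1))
      = Pu u g (n+1) := by
    intro n
    rw [hfb n, hfa n, fdiff husum hu_abs hr01 hpos hr g n]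
  have hab0 : Tendsto (fun n => (A g (n+1) + Lp g (n+1) * ((q g n : ℝ) - 1)⁻¹) - A g (n+1))
      atTop (nhds 0) := by
    apply squeeze_zero (g := fun n => (1/2:ℝ)^(n+1))
    · intro n; have := hbapos n; linarith
    · intro n
      have h1 : (A g (n+1) + Lp g (n+1) * ((q g n : ℝ) - 1)⁻¹) - A g (n+1)
          = Lp g (n+1) * ((q g n : ℝ) - 1)⁻¹ := by ring
      rw [h1]
      have h2 : ((q g n : ℝ) - 1)⁻¹ ≤ 1 := by
        have h3 : (1:ℝ) ≤ (q g n : ℝ) - 1 := by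
          have := two_le_q g n
          have : (2:ℝ) ≤ (q g n : ℝ) := by exact_mod_cast this
          linarith
        have := inv_anti₀ one_pos h3
        rwa [inv_one] at this
      calc Lp g (n+1) * ((q g n : ℝ) - 1)⁻¹ ≤ Lp g (n+1) * 1 :=
            mul_le_mul_of_nonneg_left h2 (le_of_lt (Lp_pos g (n+1)))
        _ = Lp g (n+1) := mul_one _
        _ ≤ (1/2:ℝ)^(n+1) := Lp_le_pow g (n+1)
    · have h3 := tendsto_pow_atTop_nhds_zero_of_lt_one
        (show (0:ℝ) ≤ 1/2 by norm_num) (show (1/2:ℝ) < 1 by norm_num)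
      exact h3.comp (tendsto_add_atTop_nat 1)
  have hd : HasDerivAt f (deriv f t) t := hdiff.hasDerivAt
  have hslope := slope_tendsto hd (fun n => (hmem n).1) (fun n => (hmem n).2) hab0
  set R : ℕ → ℝ := fun n => Pu u g (n+1) * ((q g n : ℝ) - 1) / Lp g (n+1) with hRdef
  have hcong : ∀ n, (f (A g (n+1) + Lp g (n+1) * ((q g n : ℝ) - 1)⁻¹) - f (A g (n+1)))
      / ((A g (n+1) + Lp g (n+1) * ((q g n : ℝ) - 1)⁻¹) - A g (n+1)) = R n := by
    intro n
    have h1 : (A g (n+1) + Lp g (n+1) * ((q g n : ℝ) - 1)⁻¹) - A g (n+1)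
        = Lp g (n+1) * ((q g n : ℝ) - 1)⁻¹ := by ring
    rw [hslopeval n, h1, hRdef]
    simp only
    rw [div_eq_div_iff (hbapos n).ne' (Lp_pos g (n+1)).ne']
    have n3 : ((q g n : ℝ) - 1) ≠ 0 := ne_of_gt (qr_sub_one_pos g n)
    field_simp
  have hR : Tendsto R atTop (nhds (deriv f t)) := hslope.congr hcong
  have hR0 : ∀ n, 0 ≤ R n := by
    intro n
    rw [hRdef]
    simp only
    apply div_nonneg _ (le_of_lt (Lp_pos g (n+1)))
    exact mul_nonneg (Finset.prod_nonneg fun i _ => hpos _) (le_of_lt (qr_sub_one_pos g n))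
  have hd0 : 0 < deriv f t := lt_of_le_of_ne (ge_of_tendsto' hR hR0) (Ne.symm hderiv)
  have hune : ∀ i, u (g i) ≠ 0 := by
    intro i hzero
    have hz : ∀ n, i ≤ n → R n = 0 := by
      intro n hn
      rw [hRdef]
      simp only
      have hP : Pu u g (n+1) = 0 :=
        Finset.prod_eq_zero (Finset.mem_range.2 (by omega)) hzero
      rw [hP, zero_mul, zero_div]
    have hzt : Tendsto R atTop (nhds 0) :=
      Filter.Tendsto.congr' (Filter.eventuallyEq_of_mem (Filter.mem_atTop i)
        fun n hn => (hz n hn).symm) tendsto_const_nhds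
    exact absurd (tendsto_nhds_unique hR hzt) (ne_of_gt hd0)
  have hPpos : ∀ k, 0 < Pu u g k :=
    fun k => Finset.prod_pos fun i _ => lt_of_le_of_ne (hpos _) (Ne.symm (hune i))
  have hRsucc : Tendsto (fun n => R (n+1)) atTop (nhds (deriv f t)) :=
    hR.comp (tendsto_add_atTop_nat 1)
  have hratio : Tendsto (fun n => R (n+1) / R n) atTop (nhds 1) := by
    have h1 := hRsucc.div hR (ne_of_gt hd0)
    rwa [div_self (ne_of_gt hd0)] at h1
  have hident : ∀ n, R (n+1) / R n
      = u (g (n+1)) * ((q g (n+1) : ℝ) * ((q g (n+1) : ℝ) - 1) / ((q g n : ℝ) - 1)) := by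
    intro n
    rw [hRdef]
    simp only
    have e1 : Pu u g (n+1+1) = Pu u g (n+1) * u (g (n+1)) := Finset.prod_range_succ _ _
    have e2 : Lp g (n+1+1) = Lp g (n+1) * ((q g (n+1):ℝ))⁻¹ := Lp_succ g (n+1)
    rw [e1, e2]
    have n1 : Pu u g (n+1) ≠ 0 := ne_of_gt (hPpos (n+1))
    have n2 : Lp g (n+1) ≠ 0 := ne_of_gt (Lp_pos g (n+1))
    have n3 : ((q g n:ℝ) - 1) ≠ 0 := ne_of_gt (qr_sub_one_pos g n)
    have n4 : ((q g (n+1):ℝ) - 1) ≠ 0 := ne_of_gt (qr_sub_one_pos g (n+1))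
    have n5 : (q g (n+1):ℝ) ≠ 0 := ne_of_gt (qr_pos g (n+1))
    field_simp
  have hbadevent : ∃ N2, ∀ n, N2 ≤ n → badCond u ε g n := by
    rw [Metric.tendsto_atTop] at hratio
    obtain ⟨N2, hN2⟩ := hratio ε hε
    refine ⟨N2, fun n hn => ?_⟩
    have h5 := hN2 n hn
    rw [Real.dist_eq, hident n] at h5
    unfold badCond
    exact le_of_lt h5
  obtain ⟨N2, hN2⟩ := hbadevent
  have hqub : ∀ M : ℕ, ∃ n, M ≤ q g n := by
    intro M
    induction M with
    | zero => exact ⟨0, Nat.zero_le _⟩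
    | succ M ihM =>
      obtain ⟨n, hn⟩ := ihM
      obtain ⟨m, hm, hgm⟩ := hT0 (n+1)
      cases m with
      | zero => omega
      | succ m' =>
        refine ⟨m' + 1, ?_⟩
        have h1 : q g n ≤ q g m' := q_mono g (by omega)
        have h2 := q_succ g m'
        omega
  obtain ⟨Mn, hMn⟩ := exists_nat_gt ((1+ε)/u 0)
  obtain ⟨n1, hn1⟩ := hqub Mn
  have hn1' : (1+ε) < u 0 * (q g n1 : ℝ) := by
    have h1 : ((1+ε)/u 0) < (q g n1 : ℝ) :=
      lt_of_lt_of_le hMn (by exact_mod_cast hn1)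
    calc 1 + ε = ((1+ε)/u 0) * u 0 := by field_simp
      _ < (q g n1:ℝ) * u 0 := mul_lt_mul_of_pos_right h1 hu0
      _ = u 0 * (q g n1:ℝ) := mul_comm _ _
  refine ⟨max n1 N2, ?_, ?_⟩
  · have h1 : (q g n1 : ℝ) ≤ (q g (max n1 N2) : ℝ) := by
      exact_mod_cast q_mono g (le_max_left _ _)
    have h2 : u 0 * (q g n1:ℝ) ≤ u 0 * (q g (max n1 N2):ℝ) :=
      mul_le_mul_of_nonneg_left h1 (hpos 0)
    linarith
  · intro m hm
    exact hN2 m (le_trans (le_max_right _ _) hm)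

end Stmt14

/-- if all u_n ≥ 0 then f is pure: either f is absolutely
continuous on [0,1] (f(x) = ∫₀ˣ f'(t) dt) or f is singular (f' = 0 a.e. on (0,1)). -/
theorem stmt14
    (u r : ℕ → ℝ)
    (hu_sum : HasSum u 1)
    (hu_abs : ∀ n, |u n| < 1)
    (hr : ∀ n, r n = 1 - ∑ i ∈ Finset.range (n + 1), u i)
    (hr01 : ∀ n, 0 < r n ∧ r n < 1)
    (G : ℝ → ℕ → ℕ)
    (hG : ∀ x ∈ Set.Ioc (0:ℝ) 1, engelSum (G x) = x)
    (hGuniq : ∀ x ∈ Set.Ioc (0:ℝ) 1, ∀ g : ℕ → ℕ, engelSum g = x → g = G x)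
    (f : ℝ → ℝ)
    (hf : ∀ x ∈ Set.Ioc (0:ℝ) 1, f x = fSeries u r (G x))
    (hf0 : f 0 = 0)
    (hpos : ∀ n, 0 ≤ u n) :
    (∀ x ∈ Set.Icc (0:ℝ) 1, f x = ∫ t in (0:ℝ)..x, deriv f t) ∨
    (∀ᵐ t ∂(MeasureTheory.volume.restrict (Set.Ioo (0:ℝ) 1)), deriv f t = 0) := by
  right
  have husum : Summable u := hu_sum.summable
  have hr0eq : r 0 = 1 - u 0 := by rw [hr 0, Finset.sum_range_one]
  have hu0 : 0 < u 0 := by have := (hr01 0).2; rw [hr0eq] at this; linarith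
  have hu01 : u 0 < 1 := by have := (hr01 0).1; rw [hr0eq] at this; linarith
  set ε : ℝ := u 0 / 2 with hεdef
  have hε : 0 < ε := by rw [hεdef]; linarith
  have hε1 : ε < 1 := by rw [hεdef]; linarith
  have hεu : ε < u 0 := by rw [hεdef]; linarith
  have htsum : ∑' j, u (j+1) = 1 - u 0 := by
    have h1 : ∑' n, u n = 1 := hu_sum.tsum_eq
    have h2 := Summable.tsum_eq_zero_add husum
    rw [h1] at h2
    linarith
  have hf' : ∀ x ∈ Set.Ioc (0:ℝ) 1, f x = Stmt14.fSeries' u r (G x) := hf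
  set T0 : Set ℝ := {x : ℝ | x ∈ Set.Ioc (0:ℝ) 1 ∧ ∃ N, ∀ m, N ≤ m → G x m = 0}
    with hT0def
  set B : ℕ → Set ℝ := fun N => {x : ℝ | x ∈ Set.Ioc (0:ℝ) 1 ∧
      (1 + ε) < u 0 * (Stmt14.q (G x) N : ℝ) ∧ ∀ m, N ≤ m → Stmt14.badCond u ε (G x) m}
    with hBdef
  have hnullT0 : volume T0 = 0 := (Stmt14.T0_countable G hG).measure_zero _
  have hnullB : ∀ N, volume (B N) = 0 := fun N =>
    Stmt14.bad_null u G hG husum hpos hu01 htsum ε hε hε1 hεu N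
  have hsubset : {x : ℝ | deriv f x ≠ 0} ∩ Set.Ioo (0:ℝ) 1 ⊆ T0 ∪ ⋃ N, B N := by
    rintro x ⟨hx1, hx2⟩
    have hxIoc : x ∈ Set.Ioc (0:ℝ) 1 := ⟨hx2.1, le_of_lt hx2.2⟩
    by_cases hdiff : DifferentiableAt ℝ f x
    · rcases Stmt14.pointwise u r G f husum hu_abs hr hr01 hpos hG hGuniq hf' ε hε hu0
        x hx2 hdiff hx1 with h | ⟨N, h1, h2⟩
      · exact Or.inl ⟨hxIoc, h⟩
      · exact Or.inr (Set.mem_iUnion.2 ⟨N, hxIoc, h1, h2⟩)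
    · exact absurd (deriv_zero_of_not_differentiableAt hdiff) hx1
  have hnull : volume (T0 ∪ ⋃ N, B N) = 0 := by
    apply measure_union_null hnullT0
    exact measure_iUnion_null_iff.2 hnullB
  rw [MeasureTheory.ae_iff]
  have happ : (volume.restrict (Set.Ioo (0:ℝ) 1)) {a : ℝ | ¬ deriv f a = 0}
      = volume ({a : ℝ | ¬ deriv f a = 0} ∩ Set.Ioo (0:ℝ) 1) :=
    Measure.restrict_apply' measurableSet_Ioo
  rw [happ]
  exact measure_mono_null hsubset hnull
end

section
/- If the sequence (u_n) contains no zero terms but contains at least one negative term, then f is nowhere monotonic on [0, 1]: there is no non-degenerate subinterval of [0, 1] on which f is monotone (non-decreasing or non-increasing). -/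
open scoped BigOperators

/- ### Auxiliary definitions and lemmas -/

/-- The digit sequence agreeing with `d` below `n`, equal to `m` at `n`, and `0` above `n`. -/
def gseq (d : ℕ → ℕ) (n m : ℕ) : ℕ → ℕ := fun i => if i < n then d i else if i = n then m else 0

/-- The `j`-th term of the Engel series of `g`. -/
noncomputable def eterm (g : ℕ → ℕ) (j : ℕ) : ℝ :=
  ∏ k ∈ Finset.range (j+1), ((2:ℝ) + ∑ i ∈ Finset.range (k+1), (g i : ℝ))⁻¹

lemma gseq_lt {d : ℕ → ℕ} {n m i : ℕ} (h : i < n) : gseq d n m i = d i := by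
  simp [gseq, h]

lemma gseq_eq {d : ℕ → ℕ} {n m : ℕ} : gseq d n m n = m := by
  simp [gseq]

lemma gseq_gt {d : ℕ → ℕ} {n m i : ℕ} (h : n < i) : gseq d n m i = 0 := by
  simp only [gseq]
  rw [if_neg (by omega), if_neg (by omega)]

lemma gseq_sum_lt (d : ℕ → ℕ) (n m k : ℕ) (hk : k < n) :
    ∑ i ∈ Finset.range (k+1), (gseq d n m i : ℝ) = ∑ i ∈ Finset.range (k+1), (d i : ℝ) := by
  refine Finset.sum_congr rfl fun i hi => ?_
  rw [gseq_lt (by simp at hi; omega)]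

lemma gseq_sum_ge (d : ℕ → ℕ) (n m k : ℕ) (hk : n ≤ k) :
    ∑ i ∈ Finset.range (k+1), (gseq d n m i : ℝ)
      = (∑ i ∈ Finset.range n, (d i : ℝ)) + m := by
  have hk1 : k + 1 = n + (k - n + 1) := by omega
  rw [hk1, Finset.sum_range_add]
  congr 1
  · exact Finset.sum_congr rfl fun i hi => by rw [gseq_lt (by simp at hi; omega)]
  · rw [Finset.sum_range_succ']
    have h1 : ∀ x : ℕ, (gseq d n m (n + (x + 1)) : ℝ) = 0 := by
      intro x; rw [gseq_gt (by omega)]; simp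
    simp [h1, gseq_eq]

lemma two_add_sum_pos (g : ℕ → ℕ) (k : ℕ) :
    (0:ℝ) < 2 + ∑ i ∈ Finset.range (k+1), (g i : ℝ) := by
  have h : (0:ℝ) ≤ ∑ i ∈ Finset.range (k+1), (g i : ℝ) :=
    Finset.sum_nonneg fun i _ => Nat.cast_nonneg _
  linarith

lemma two_le_two_add_sum (g : ℕ → ℕ) (k : ℕ) :
    (2:ℝ) ≤ 2 + ∑ i ∈ Finset.range (k+1), (g i : ℝ) := by
  have h : (0:ℝ) ≤ ∑ i ∈ Finset.range (k+1), (g i : ℝ) :=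
    Finset.sum_nonneg fun i _ => Nat.cast_nonneg _
  linarith

lemma eterm_pos (g : ℕ → ℕ) (j : ℕ) : 0 < eterm g j :=
  Finset.prod_pos fun k _ => inv_pos.mpr (two_add_sum_pos g k)

lemma eterm_le (g : ℕ → ℕ) (j : ℕ) : eterm g j ≤ (1/2:ℝ)^(j+1) := by
  have h : ∀ k ∈ Finset.range (j+1),
      ((2:ℝ) + ∑ i ∈ Finset.range (k+1), (g i : ℝ))⁻¹ ≤ 1/2 := by
    intro k _
    have := inv_anti₀ (by norm_num : (0:ℝ) < 2) (two_le_two_add_sum g k)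
    simpa using this
  calc eterm g j ≤ ∏ k ∈ Finset.range (j+1), (1/2:ℝ) :=
        Finset.prod_le_prod (fun k _ => (inv_pos.mpr (two_add_sum_pos g k)).le) h
    _ = (1/2:ℝ)^(j+1) := by rw [Finset.prod_const, Finset.card_range]

lemma summable_half_pow : Summable (fun j : ℕ => (1/2:ℝ)^(j+1)) := by
  have := (summable_geometric_of_lt_one (by norm_num : (0:ℝ) ≤ 1/2) (by norm_num)).mul_right
    (1/2:ℝ)
  simpa [pow_succ] using this

lemma eterm_summable (g : ℕ → ℕ) : Summable (eterm g) :=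
  Summable.of_nonneg_of_le (fun j => (eterm_pos g j).le) (eterm_le g) summable_half_pow

lemma eterm_gseq_lt (d : ℕ → ℕ) (n m j : ℕ) (hj : j < n) :
    eterm (gseq d n m) j = eterm d j := by
  refine Finset.prod_congr rfl fun k hk => ?_
  rw [gseq_sum_lt d n m k (by simp at hk; omega)]

lemma eterm_gseq_ge (d : ℕ → ℕ) (n m t : ℕ) :
    eterm (gseq d n m) (t + n)
      = (∏ k ∈ Finset.range n, ((2:ℝ) + ∑ i ∈ Finset.range (k+1), (d i : ℝ))⁻¹)
        * (((2:ℝ) + (∑ i ∈ Finset.range n, (d i : ℝ)) + m)⁻¹) ^ (t+1) := by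
  unfold eterm
  have h : t + n + 1 = n + (t + 1) := by omega
  rw [h, Finset.prod_range_add]
  congr 1
  · exact Finset.prod_congr rfl fun k hk => by rw [gseq_sum_lt d n m k (by simp at hk; omega)]
  · have hx : ∀ x ∈ Finset.range (t+1),
        ((2:ℝ) + ∑ i ∈ Finset.range (n + x + 1), (gseq d n m i : ℝ))⁻¹
          = ((2:ℝ) + (∑ i ∈ Finset.range n, (d i : ℝ)) + m)⁻¹ := by
      intro x _
      rw [show n + x + 1 = (n + x) + 1 from rfl, gseq_sum_ge d n m (n + x) (by omega)]
      ring_nf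
    rw [Finset.prod_congr rfl hx, Finset.prod_const, Finset.card_range]

/-- Closed form for the Engel value of the sequence `gseq d n m`. -/
lemma engel_gseq (d : ℕ → ℕ) (n m : ℕ) :
    engelSum (gseq d n m)
      = (∑ j ∈ Finset.range n, eterm d j)
        + (∏ k ∈ Finset.range n, ((2:ℝ) + ∑ i ∈ Finset.range (k+1), (d i : ℝ))⁻¹)
          * ((1:ℝ) + (∑ i ∈ Finset.range n, (d i : ℝ)) + m)⁻¹ := by
  have hs := eterm_summable (gseq d n m)
  have hsplit := Summable.sum_add_tsum_nat_add (f := eterm (gseq d n m)) n hs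
  have h1 : engelSum (gseq d n m) = ∑' j, eterm (gseq d n m) j := rfl
  set S : ℝ := ∑ i ∈ Finset.range n, (d i : ℝ) with hS
  have hSnn : 0 ≤ S := Finset.sum_nonneg fun i _ => Nat.cast_nonneg _
  set ρ : ℝ := ((2:ℝ) + S + m)⁻¹ with hρ
  have hx : (0:ℝ) < 2 + S + m := by positivity
  have hρ0 : 0 ≤ ρ := inv_nonneg.mpr hx.le
  have hρ1 : ρ < 1 := by
    rw [hρ, inv_lt_one_iff₀]
    right; linarith [Nat.cast_nonneg (α := ℝ) m]
  set PE : ℝ := ∏ k ∈ Finset.range n, ((2:ℝ) + ∑ i ∈ Finset.range (k+1), (d i : ℝ))⁻¹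
  have htail : ∑' t, eterm (gseq d n m) (t + n) = PE * ((1:ℝ) + S + m)⁻¹ := by
    have heq : ∀ t : ℕ, eterm (gseq d n m) (t + n) = (PE * ρ) * ρ ^ t := by
      intro t
      rw [eterm_gseq_ge, pow_succ]
      ring
    rw [tsum_congr heq, tsum_mul_left, tsum_geometric_of_lt_one hρ0 hρ1]
    have h2 : ρ * (1 - ρ)⁻¹ = ((1:ℝ) + S + m)⁻¹ := by
      rw [hρ]
      have h3 : (0:ℝ) < 1 + S + m := by positivity
      have hne2 : (2 + S + (m:ℝ)) ≠ 0 := hx.ne'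
      have hne1 : (1 + S + (m:ℝ)) ≠ 0 := h3.ne'
      rw [show (1:ℝ) - (2 + S + m)⁻¹ = (1 + S + m) * (2 + S + m)⁻¹ by field_simp; ring]
      rw [mul_inv, inv_inv]
      field_simp
    rw [mul_assoc, h2]
  rw [h1, ← hsplit, htail]
  congr 1
  exact Finset.sum_congr rfl fun j hj => eterm_gseq_lt d n m j (by simp at hj; omega)

lemma engel_tail (d : ℕ → ℕ) (n : ℕ) :
    engelSum d = (∑ j ∈ Finset.range n, eterm d j) + ∑' t, eterm d (t + n) :=
  ((Summable.sum_add_tsum_nat_add (f := eterm d) n (eterm_summable d)).symm : _)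

lemma engel_tail_pos (d : ℕ → ℕ) (n : ℕ) : 0 < ∑' t, eterm d (t + n) :=
  Summable.tsum_pos ((summable_nat_add_iff n).mpr (eterm_summable d))
    (fun t => (eterm_pos d (t + n)).le) 0 (eterm_pos d (0 + n))

lemma engel_tail_le (d : ℕ → ℕ) (n : ℕ) : ∑' t, eterm d (t + n) ≤ (1/2:ℝ)^n := by
  have hsum : Summable (fun t => (1/2:ℝ)^(t + n + 1)) := by
    have := (summable_geometric_of_lt_one (by norm_num : (0:ℝ) ≤ 1/2) (by norm_num)).mul_right
      ((1/2:ℝ)^(n+1))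
    refine this.congr fun t => ?_
    rw [← pow_add]; ring_nf
  have h1 : ∑' t, eterm d (t + n) ≤ ∑' t : ℕ, (1/2:ℝ)^(t + n + 1) :=
    Summable.tsum_le_tsum (fun t => eterm_le d (t + n))
      ((summable_nat_add_iff n).mpr (eterm_summable d)) hsum
  have h2 : ∑' t : ℕ, (1/2:ℝ)^(t + n + 1) = (1/2:ℝ)^n := by
    have h3 : ∀ t : ℕ, (1/2:ℝ)^(t + n + 1) = ((1/2:ℝ)^(n+1)) * (1/2:ℝ)^t := by
      intro t; rw [← pow_add]; ring_nf
    rw [tsum_congr h3, tsum_mul_left, tsum_geometric_of_lt_one (by norm_num) (by norm_num)]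
    norm_num [pow_succ]
    ring
  linarith

lemma prod_u_gseq_lt (u : ℕ → ℝ) (d : ℕ → ℕ) (n m k : ℕ) (hk : k < n) :
    ∏ i ∈ Finset.range (k+1), u (gseq d n m i) = ∏ i ∈ Finset.range (k+1), u (d i) :=
  Finset.prod_congr rfl fun i hi => by rw [gseq_lt (by simp at hi; omega)]

lemma prod_u_gseq_ge (u : ℕ → ℝ) (d : ℕ → ℕ) (n m k : ℕ) (hk : n ≤ k) :
    ∏ i ∈ Finset.range (k+1), u (gseq d n m i)
      = (∏ i ∈ Finset.range n, u (d i)) * (u m * (u 0)^(k - n)) := by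
  have h : k + 1 = n + (k - n + 1) := by omega
  rw [h, Finset.prod_range_add]
  congr 1
  · exact Finset.prod_congr rfl fun i hi => by rw [gseq_lt (by simp at hi; omega)]
  · rw [Finset.prod_range_succ']
    have h1 : ∀ x ∈ Finset.range (k - n), u (gseq d n m (n + (x + 1))) = u 0 := by
      intro x _; rw [gseq_gt (by omega)]
    rw [Finset.prod_congr rfl h1, Finset.prod_const, Finset.card_range, show n + 0 = n from rfl,
      gseq_eq]
    ring

/-- Closed form for the value of the `f`-series on the sequence `gseq d n m`. -/
lemma fseries_gseq (u r : ℕ → ℝ) (hr0 : r 0 = 1 - u 0) (h0 : |u 0| < 1)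
    (d : ℕ → ℕ) (n m : ℕ) (hn : 1 ≤ n) :
    fSeries u r (gseq d n m)
      = r (d 0)
        + (∑ k ∈ Finset.range (n-1), r (d (k+1)) * ∏ i ∈ Finset.range (k+1), u (d i))
        + (∏ i ∈ Finset.range n, u (d i)) * (r m + u m) := by
  set g := gseq d n m with hg
  set T : ℕ → ℝ := fun k => r (g (k + 1)) * ∏ i ∈ Finset.range (k + 1), u (g i) with hT
  set P : ℝ := ∏ i ∈ Finset.range n, u (d i) with hP
  have hTtail : ∀ t : ℕ, T (t + n) = (r 0 * (P * u m)) * (u 0)^t := by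
    intro t
    have h1 : g (t + n + 1) = 0 := gseq_gt (by omega)
    have h2 : ∏ i ∈ Finset.range (t + n + 1), u (g i)
        = P * (u m * (u 0)^t) := by
      rw [hg, prod_u_gseq_ge u d n m (t + n) (by omega), show t + n - n = t by omega]
    rw [hT]; simp only [h1, h2]; ring
  have hTsum : Summable T := by
    rw [← summable_nat_add_iff n]
    refine ((summable_geometric_of_norm_lt_one (x := u 0)
      (by rwa [Real.norm_eq_abs])).mul_left (r 0 * (P * u m))).congr fun t => (hTtail t).symm
  have hsplit := Summable.sum_add_tsum_nat_add (f := T) n hTsum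
  have hfs : fSeries u r g = r (g 0) + ∑' k, T k := rfl
  have hg0 : g 0 = d 0 := gseq_lt (by omega)
  have htail : ∑' t, T (t + n) = P * u m := by
    rw [tsum_congr hTtail, tsum_mul_left,
      tsum_geometric_of_norm_lt_one (by rwa [Real.norm_eq_abs]), hr0]
    have : (1:ℝ) - u 0 ≠ 0 := by
      have : u 0 < 1 := lt_of_le_of_lt (le_abs_self _) h0
      linarith
    field_simp
  have hfin : ∑ k ∈ Finset.range n, T k
      = (∑ k ∈ Finset.range (n-1), r (d (k+1)) * ∏ i ∈ Finset.range (k+1), u (d i))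
        + r m * P := by
    have hn1 : n = (n - 1) + 1 := by omega
    rw [hn1, Finset.sum_range_succ]
    congr 1
    · refine Finset.sum_congr rfl fun k hk => ?_
      have hk' : k < n - 1 := by simpa using hk
      rw [hT]
      simp only
      rw [hg, gseq_lt (show k + 1 < n by omega), prod_u_gseq_lt u d n m k (by omega)]
    · rw [hT]
      simp only
      rw [hg, show n - 1 + 1 = n by omega, gseq_eq]
      congr 1
      exact Finset.prod_congr rfl fun i hi => by rw [gseq_lt (by simp at hi; omega)]
  rw [hfs, ← hsplit, hfin, htail, hg0]
  ring

/-- if no u_n vanishes but some u_n < 0, then f is monotone on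
no non-degenerate subinterval of [0,1]. -/
theorem stmt15
    (u r : ℕ → ℝ)
    (hu_sum : HasSum u 1)
    (hu_abs : ∀ n, |u n| < 1)
    (hr : ∀ n, r n = 1 - ∑ i ∈ Finset.range (n + 1), u i)
    (hr01 : ∀ n, 0 < r n ∧ r n < 1)
    (G : ℝ → ℕ → ℕ)
    (hG : ∀ x ∈ Set.Ioc (0:ℝ) 1, engelSum (G x) = x)
    (hGuniq : ∀ x ∈ Set.Ioc (0:ℝ) 1, ∀ g : ℕ → ℕ, engelSum g = x → g = G x)
    (f : ℝ → ℝ)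
    (hf : ∀ x ∈ Set.Ioc (0:ℝ) 1, f x = fSeries u r (G x))
    (hf0 : f 0 = 0)
    (hu0 : ∀ n, u n ≠ 0) (hneg : ∃ n, u n < 0) :
    ∀ a b : ℝ, 0 ≤ a → a < b → b ≤ 1 →
      ¬ (MonotoneOn f (Set.Ioo a b) ∨ AntitoneOn f (Set.Ioo a b)) := by
  intro a b ha hab hb H
  -- the midpoint
  set c : ℝ := (a + b) / 2 with hc_def
  have hac : a < c := by simp only [hc_def]; linarith
  have hcb : c < b := by simp only [hc_def]; linarith
  have hcIoc : c ∈ Set.Ioc (0:ℝ) 1 := ⟨by linarith, by linarith⟩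
  set d : ℕ → ℕ := G c with hd
  have hcd : engelSum d = c := hG c hcIoc
  -- choose the depth n
  obtain ⟨n0, hn0⟩ := exists_pow_lt_of_lt_one
    (show (0:ℝ) < min (c - a) (b - c) by simp only [lt_min_iff]; constructor <;> linarith)
    (show (1/2:ℝ) < 1 by norm_num)
  set n : ℕ := n0 + 1 with hn_def
  have hn1 : 1 ≤ n := Nat.le_add_left 1 n0
  have hpow : (1/2:ℝ)^n < min (c - a) (b - c) := by
    refine lt_of_le_of_lt ?_ hn0
    rw [hn_def, pow_succ]
    nlinarith [pow_pos (show (0:ℝ) < 1/2 by norm_num) n0]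
  have hpow_a : (1/2:ℝ)^n < c - a := lt_of_lt_of_le hpow (min_le_left _ _)
  have hpow_b : (1/2:ℝ)^n < b - c := lt_of_lt_of_le hpow (min_le_right _ _)
  -- notation
  set A : ℝ := ∑ j ∈ Finset.range n, eterm d j with hA
  set PE : ℝ := ∏ k ∈ Finset.range n, ((2:ℝ) + ∑ i ∈ Finset.range (k+1), (d i : ℝ))⁻¹
    with hPE
  set S : ℝ := ∑ i ∈ Finset.range n, (d i : ℝ) with hS
  have hSnn : 0 ≤ S := Finset.sum_nonneg fun i _ => Nat.cast_nonneg _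
  have hPE_pos : 0 < PE := Finset.prod_pos fun k _ => inv_pos.mpr (two_add_sum_pos d k)
  have hPE_le : PE ≤ (1/2:ℝ)^n := by
    have := eterm_le d (n - 1)
    rw [show n - 1 + 1 = n by omega] at this
    simpa [eterm, hPE, show n - 1 + 1 = n by omega] using this
  -- the test points
  set x : ℕ → ℝ := fun m => engelSum (gseq d n m) with hx
  have hx_closed : ∀ m : ℕ, x m = A + PE * ((1:ℝ) + S + m)⁻¹ := fun m => engel_gseq d n m
  have hden_pos : ∀ m : ℕ, (0:ℝ) < 1 + S + m := by
    intro m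
    have : (0:ℝ) ≤ (m:ℝ) := Nat.cast_nonneg m
    linarith
  have htm_pos : ∀ m : ℕ, 0 < PE * ((1:ℝ) + S + m)⁻¹ :=
    fun m => mul_pos hPE_pos (inv_pos.mpr (hden_pos m))
  have htm_le : ∀ m : ℕ, PE * ((1:ℝ) + S + m)⁻¹ ≤ (1/2:ℝ)^n := by
    intro m
    have h1 : ((1:ℝ) + S + m)⁻¹ ≤ 1 := by
      rw [inv_le_one_iff₀]
      right
      have : (0:ℝ) ≤ (m:ℝ) := Nat.cast_nonneg m
      linarith
    calc PE * ((1:ℝ) + S + m)⁻¹ ≤ PE * 1 :=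
          mul_le_mul_of_nonneg_left h1 hPE_pos.le
      _ = PE := mul_one PE
      _ ≤ (1/2:ℝ)^n := hPE_le
  -- the tail of c itself
  have hc_split : c = A + ∑' t, eterm d (t + n) := by rw [← hcd]; exact engel_tail d n
  have htc_pos : 0 < ∑' t, eterm d (t + n) := engel_tail_pos d n
  have htc_le : ∑' t, eterm d (t + n) ≤ (1/2:ℝ)^n := engel_tail_le d n
  -- membership of the test points
  have hxmem : ∀ m : ℕ, x m ∈ Set.Ioo a b := by
    intro m
    rw [hx_closed m]
    constructor
    · have : c ≤ A + (1/2:ℝ)^n := by rw [hc_split]; linarith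
      nlinarith [htm_pos m]
    · have : A < c := by rw [hc_split]; linarith
      nlinarith [htm_le m]
  have hxIoc : ∀ m : ℕ, x m ∈ Set.Ioc 0 1 := by
    intro m
    obtain ⟨h1, h2⟩ := hxmem m
    exact ⟨by linarith, by linarith⟩
  have hGx : ∀ m : ℕ, G (x m) = gseq d n m :=
    fun m => (hGuniq (x m) (hxIoc m) (gseq d n m) rfl).symm
  -- values of f at the test points
  have hr0 : r 0 = 1 - u 0 := by
    have := hr 0
    simpa using this
  set P : ℝ := ∏ i ∈ Finset.range n, u (d i) with hP
  set C : ℝ := r (d 0)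
      + (∑ k ∈ Finset.range (n-1), r (d (k+1)) * ∏ i ∈ Finset.range (k+1), u (d i)) with hC
  have hfx : ∀ m : ℕ, f (x m) = C + P * (r m + u m) := by
    intro m
    rw [hf (x m) (hxIoc m), hGx m, fseries_gseq u r hr0 (hu_abs 0) d n m hn1]
  -- the test points strictly decrease
  have hxanti : ∀ m : ℕ, x (m + 1) < x m := by
    intro m
    rw [hx_closed m, hx_closed (m + 1)]
    have h1 : (1:ℝ) + S + m < 1 + S + (m + 1 : ℕ) := by push_cast; linarith
    have h2 := inv_strictAnti₀ (hden_pos m) h1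
    nlinarith
  -- f-increments along the test points
  have hdiff : ∀ m : ℕ, f (x m) - f (x (m + 1)) = P * u m := by
    intro m
    rw [hfx m, hfx (m + 1)]
    have h1 : r (m + 1) = r m - u (m + 1) := by
      rw [hr (m + 1), hr m, Finset.sum_range_succ]
      ring
    rw [h1]
    ring
  -- sign facts
  have hu0pos : 0 < u 0 := by
    have h1 := (hr01 0).2
    rw [hr0] at h1
    linarith
  obtain ⟨N, hN⟩ := hneg
  have hPne : P ≠ 0 := Finset.prod_ne_zero_iff.mpr fun i _ => hu0 (d i)
  -- conclusion
  rcases H with hmono | hanti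
  · rcases hPne.lt_or_gt with hPneg | hPpos
    · have h1 := hmono (hxmem 1) (hxmem 0) (hxanti 0).le
      have h2 := hdiff 0
      have h3 : P * u 0 < 0 := mul_neg_of_neg_of_pos hPneg hu0pos
      linarith
    · have h1 := hmono (hxmem (N + 1)) (hxmem N) (hxanti N).le
      have h2 := hdiff N
      have h3 : P * u N < 0 := mul_neg_of_pos_of_neg hPpos hN
      linarith
  · rcases hPne.lt_or_gt with hPneg | hPpos
    · have h1 := hanti (hxmem (N + 1)) (hxmem N) (hxanti N).le
      have h2 := hdiff N
      have h3 : 0 < P * u N := mul_pos_of_neg_of_neg hPneg hN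
      linarith
    · have h1 := hanti (hxmem 1) (hxmem 0) (hxanti 0).le
      have h2 := hdiff 0
      have h3 : 0 < P * u 0 := mul_pos hPpos hu0pos
      linarith
end

section
/- Let c_1,…,c_m, i be non-negative integers and x_0 := Δ^E_{c_1…c_m i(0)} the E-rational point with digits c_1,…,c_m,i followed by the all-zero tail. (1) If u_{i−1}·u_i < 0 (with u_{−1} interpreted via r_{−1} = 1, i.e., i ≥ 1) and D_m := ∏_{j=1}^m u_{c_j} ≠ 0, then x_0 is a local extremum point of f: a local maximum if D_m·u_i > 0 and a local minimum if D_m·u_i < 0. (2) If u_{i−1}·u_i ≥ 0, then x_0 is not a local extremum point of f. -/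
open scoped BigOperators

/-- A strict local maximum point: f t < f x₀ in a punctured neighbourhood. -/
def IsStrictLocalMaxPt (f : ℝ → ℝ) (x₀ : ℝ) : Prop :=
  ∀ᶠ t in nhdsWithin x₀ {x₀}ᶜ, f t < f x₀

/-- A strict local minimum point: f x₀ < f t in a punctured neighbourhood. -/
def IsStrictLocalMinPt (f : ℝ → ℝ) (x₀ : ℝ) : Prop :=
  ∀ᶠ t in nhdsWithin x₀ {x₀}ᶜ, f x₀ < f t

set_option linter.unusedSectionVars false

namespace S16

/-- cons for digit sequences -/
def econs (a : ℕ) (g : ℕ → ℕ) : ℕ → ℕ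
  | 0 => a
  | n+1 => g n

/-- add `a` to the first digit -/
def addF (a : ℕ) (g : ℕ → ℕ) : ℕ → ℕ
  | 0 => g 0 + a
  | n+1 => g (n+1)

noncomputable def eterm (g : ℕ → ℕ) (n : ℕ) : ℝ :=
  ∏ k ∈ Finset.range (n + 1), ((2 : ℝ) + ∑ i ∈ Finset.range (k + 1), (g i : ℝ))⁻¹

lemma engelSum_eq (g : ℕ → ℕ) : engelSum g = ∑' n, eterm g n := rfl

lemma two_le_Q (g : ℕ → ℕ) (k : ℕ) :
    (2:ℝ) ≤ 2 + ∑ i ∈ Finset.range (k + 1), (g i : ℝ) := by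
  have : (0:ℝ) ≤ ∑ i ∈ Finset.range (k + 1), (g i : ℝ) :=
    Finset.sum_nonneg fun i _ => Nat.cast_nonneg _
  linarith

lemma g0_le_Q (g : ℕ → ℕ) (k : ℕ) :
    (2:ℝ) + g 0 ≤ 2 + ∑ i ∈ Finset.range (k + 1), (g i : ℝ) := by
  have : (g 0:ℝ) ≤ ∑ i ∈ Finset.range (k + 1), (g i : ℝ) :=
    Finset.single_le_sum (f := fun i => (g i:ℝ)) (fun i _ => Nat.cast_nonneg _)
      (Finset.mem_range.2 (Nat.succ_pos k))
  linarith

lemma eterm_pos (g : ℕ → ℕ) (n : ℕ) : 0 < eterm g n :=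
  Finset.prod_pos fun k _ => inv_pos.2 (lt_of_lt_of_le two_pos (two_le_Q g k))

lemma eterm_le (g : ℕ → ℕ) (n : ℕ) : eterm g n ≤ (((2:ℝ) + g 0)⁻¹) ^ (n + 1) := by
  have h : eterm g n ≤ ∏ _k ∈ Finset.range (n+1), ((2:ℝ) + g 0)⁻¹ := by
    apply Finset.prod_le_prod
    · intro k _; exact le_of_lt (inv_pos.2 (lt_of_lt_of_le two_pos (two_le_Q g k)))
    · intro k _
      exact inv_anti₀ (by positivity) (g0_le_Q g k)
  simpa using h

lemma c_lt_one (g : ℕ → ℕ) : ((2:ℝ) + g 0)⁻¹ < 1 := by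
  rw [inv_lt_one_iff₀]; right; have : (0:ℝ) ≤ g 0 := Nat.cast_nonneg _; linarith

lemma c_nonneg (g : ℕ → ℕ) : 0 ≤ ((2:ℝ) + g 0)⁻¹ := by positivity

lemma summable_pow_succ {c : ℝ} (h0 : 0 ≤ c) (h1 : c < 1) :
    Summable (fun n : ℕ => c ^ (n+1)) :=
  ((summable_geometric_of_lt_one h0 h1).mul_left c).congr fun n => (pow_succ' c n).symm

lemma summable_eterm (g : ℕ → ℕ) : Summable (eterm g) :=
  Summable.of_nonneg_of_le (fun n => (eterm_pos g n).le) (eterm_le g)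
    (summable_pow_succ (c_nonneg g) (c_lt_one g))

lemma engelSum_pos (g : ℕ → ℕ) : 0 < engelSum g :=
  Summable.tsum_pos (summable_eterm g) (fun n => (eterm_pos g n).le) 0 (eterm_pos g 0)

lemma tsum_pow_succ {c : ℝ} (h0 : 0 ≤ c) (h1 : c < 1) :
    ∑' n : ℕ, c ^ (n+1) = c * (1 - c)⁻¹ := by
  have := tsum_geometric_of_lt_one h0 h1
  calc ∑' n : ℕ, c ^ (n+1) = ∑' n : ℕ, c * c ^ n := by
        exact tsum_congr fun n => by ring
    _ = c * (1-c)⁻¹ := by rw [tsum_mul_left, this]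

lemma engelSum_le (g : ℕ → ℕ) : engelSum g ≤ ((1:ℝ) + g 0)⁻¹ := by
  have hs : Summable (fun n : ℕ => (((2:ℝ) + g 0)⁻¹) ^ (n+1)) :=
    summable_pow_succ (c_nonneg g) (c_lt_one g)
  have h := Summable.tsum_le_tsum (eterm_le g) (summable_eterm g) hs
  rw [engelSum_eq]
  refine h.trans ?_
  rw [tsum_pow_succ (c_nonneg g) (c_lt_one g)]
  have h2 : (0:ℝ) < 2 + g 0 := by positivity
  have h1 : (0:ℝ) < 1 + g 0 := by positivity
  have hc : (1:ℝ) - (2+(g 0:ℝ))⁻¹ = (1+(g 0:ℝ))/(2+(g 0:ℝ)) := by field_simp; ring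
  rw [hc, inv_div]
  rw [inv_eq_one_div, div_mul_div_comm, one_mul]
  rw [inv_eq_one_div, div_le_div_iff₀ (by positivity) h1]
  ring_nf
  linarith

lemma engelSum_le_one (g : ℕ → ℕ) : engelSum g ≤ 1 := by
  have := engelSum_le g
  have h1 : (1:ℝ) ≤ 1 + g 0 := by have : (0:ℝ) ≤ g 0 := Nat.cast_nonneg _; linarith
  calc engelSum g ≤ ((1:ℝ) + g 0)⁻¹ := this
    _ ≤ 1 := by rw [inv_le_one_iff₀]; right; exact h1

lemma engelSum_gt (g : ℕ → ℕ) : ((2:ℝ) + g 0)⁻¹ < engelSum g := by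
  rw [engelSum_eq, Summable.tsum_eq_zero_add (summable_eterm g)]
  have h0 : eterm g 0 = ((2:ℝ) + g 0)⁻¹ := by simp [eterm]
  have hpos : 0 < ∑' n : ℕ, eterm g (n+1) :=
    Summable.tsum_pos ((summable_nat_add_iff 1).2 (summable_eterm g))
      (fun n => (eterm_pos g _).le) 0 (eterm_pos g 1)
  rw [h0]; linarith


lemma sum_econs (a : ℕ) (g : ℕ → ℕ) (k : ℕ) :
    ∑ i ∈ Finset.range (k + 2), ((econs a g) i : ℝ) = a + ∑ i ∈ Finset.range (k+1), (g i : ℝ) := by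
  rw [Finset.sum_range_succ']
  simp only [econs]
  ring

lemma sum_addF (a : ℕ) (g : ℕ → ℕ) (k : ℕ) :
    ∑ i ∈ Finset.range (k + 1), ((addF a g) i : ℝ) = a + ∑ i ∈ Finset.range (k+1), (g i : ℝ) := by
  rw [Finset.sum_range_succ', Finset.sum_range_succ' (fun i => (g i:ℝ))]
  simp only [addF]
  push_cast
  ring

lemma eterm_econs_succ (a : ℕ) (g : ℕ → ℕ) (n : ℕ) :
    eterm (econs a g) (n+1) = ((2:ℝ) + a)⁻¹ * eterm (addF a g) n := by
  unfold eterm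
  rw [Finset.prod_range_succ']
  have h0 : ((2:ℝ) + ∑ i ∈ Finset.range (0+1), ((econs a g) i : ℝ))⁻¹ = ((2:ℝ)+a)⁻¹ := by
    simp [econs]
  rw [h0, mul_comm]
  congr 1
  apply Finset.prod_congr rfl
  intro k _
  congr 1
  rw [sum_econs, sum_addF]

lemma engelSum_econs (a : ℕ) (g : ℕ → ℕ) :
    engelSum (econs a g) = ((2:ℝ) + a)⁻¹ * (1 + engelSum (addF a g)) := by
  rw [engelSum_eq, Summable.tsum_eq_zero_add (summable_eterm _)]
  have h0 : eterm (econs a g) 0 = ((2:ℝ) + a)⁻¹ := by simp [eterm, econs]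
  have h1 : ∑' n : ℕ, eterm (econs a g) (n+1) = ((2:ℝ)+a)⁻¹ * engelSum (addF a g) := by
    rw [engelSum_eq, ← tsum_mul_left]
    exact tsum_congr fun n => eterm_econs_succ a g n
  rw [h0, h1]
  ring

lemma addF_zero (g : ℕ → ℕ) : addF 0 g = g := by
  funext n; cases n <;> simp [addF]

lemma addF_econs (a b : ℕ) (g : ℕ → ℕ) : addF a (econs b g) = econs (b + a) g := by
  funext n; cases n <;> simp [addF, econs]

lemma econs_shift (g : ℕ → ℕ) : econs (g 0) (fun n => g (n+1)) = g := by
  funext n; cases n <;> simp [econs]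

/-- the all-`b`-then-zeros sequence -/
lemma engelSum_delta (b : ℕ) : engelSum (econs b (fun _ => 0)) = ((1:ℝ) + b)⁻¹ := by
  have hsum : ∀ k, ∑ i ∈ Finset.range (k+1), ((econs b (fun _ => 0)) i : ℝ) = b := by
    intro k
    induction k with
    | zero => simp [econs]
    | succ k ih => rw [Finset.sum_range_succ, ih]; simp [econs]
  have ht : ∀ n, eterm (econs b (fun _ => 0)) n = (((2:ℝ)+b)⁻¹) ^ (n+1) := by
    intro n
    unfold eterm
    have h : ∏ k ∈ Finset.range (n+1),
        ((2:ℝ) + ∑ i ∈ Finset.range (k+1), ((econs b fun _ => 0) i : ℝ))⁻¹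
        = ∏ _k ∈ Finset.range (n+1), ((2:ℝ)+b)⁻¹ :=
      Finset.prod_congr rfl (fun k _ => by rw [hsum])
    rw [h, Finset.prod_const, Finset.card_range]
  rw [engelSum_eq]
  have hb0 : (0:ℝ) ≤ ((2:ℝ)+b)⁻¹ := by positivity
  have hb1 : ((2:ℝ)+b)⁻¹ < 1 := by
    rw [inv_lt_one_iff₀]; right; have : (0:ℝ) ≤ (b:ℝ) := Nat.cast_nonneg _; linarith
  calc ∑' n, eterm (econs b (fun _ => 0)) n = ∑' n : ℕ, (((2:ℝ)+b)⁻¹) ^ (n+1) :=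
        tsum_congr ht
    _ = ((2:ℝ)+b)⁻¹ * (1 - ((2:ℝ)+b)⁻¹)⁻¹ := tsum_pow_succ hb0 hb1
    _ = ((1:ℝ) + b)⁻¹ := by
        have h2 : (0:ℝ) < 2 + b := by positivity
        have h1 : (0:ℝ) < 1 + b := by positivity
        have hc : (1:ℝ) - (2+(b:ℝ))⁻¹ = (1+(b:ℝ))/(2+(b:ℝ)) := by field_simp; ring
        rw [hc, inv_div, inv_eq_one_div, div_mul_div_comm, one_mul]
        rw [eq_comm, inv_eq_one_div, div_eq_div_iff (ne_of_gt h1) (by positivity)]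
        ring

def preSeq (m : ℕ) (c t : ℕ → ℕ) : ℕ → ℕ := fun n => if n < m then c n else t (n - m)

lemma preSeq_zero (c t : ℕ → ℕ) : preSeq 0 c t = t := by
  funext n; simp [preSeq]

lemma preSeq_succ (m : ℕ) (c t : ℕ → ℕ) :
    preSeq (m+1) c t = preSeq m c (econs (c m) t) := by
  funext n
  unfold preSeq
  rcases lt_trichotomy n m with h | h | h
  · rw [if_pos h, if_pos (by omega)]
  · subst h
    rw [if_pos (by omega), if_neg (by omega)]
    simp [econs]
  · rw [if_neg (by omega), if_neg (by omega)]
    have h2 : n - m = (n - (m+1)) + 1 := by omega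
    rw [h2]
    simp [econs]

lemma engelSum_preSeq (m : ℕ) (c : ℕ → ℕ) : ∀ t : ℕ → ℕ,
    engelSum (preSeq m c t) =
      (∑ n ∈ Finset.range m, ∏ k ∈ Finset.range (n+1),
        ((2:ℝ) + ∑ i ∈ Finset.range (k+1), (c i : ℝ))⁻¹)
      + (∏ k ∈ Finset.range m, ((2:ℝ) + ∑ i ∈ Finset.range (k+1), (c i : ℝ))⁻¹)
        * engelSum (addF (∑ i ∈ Finset.range m, c i) t) := by
  induction m with
  | zero => intro t; simp [preSeq_zero, addF_zero]
  | succ m ih =>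
    intro t
    rw [preSeq_succ, ih]
    rw [addF_econs, engelSum_econs]
    rw [Finset.sum_range_succ, Finset.prod_range_succ,
      Finset.sum_range_succ (fun i => (c i:ℝ)), Finset.sum_range_succ c]
    have hQ : ((2:ℝ) + (↑(c m) + ↑(∑ i ∈ Finset.range m, c i)))⁻¹
        = ((2:ℝ) + ((∑ i ∈ Finset.range m, (c i:ℝ)) + (c m:ℝ)))⁻¹ := by
      push_cast; ring_nf
    have hadd : (c m + ∑ i ∈ Finset.range m, c i : ℕ) = ∑ i ∈ Finset.range m, c i + c m := by omega
    rw [hadd]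
    push_cast
    ring


section F

variable {u r : ℕ → ℝ} {q : ℝ}
variable (hq : ∀ n, |u n| ≤ q) (hq1 : q < 1) (hq0 : 0 ≤ q)
variable (hr01 : ∀ n, 0 < r n ∧ r n < 1)

noncomputable def Fsum (u r : ℕ → ℝ) (g : ℕ → ℕ) : ℝ :=
  ∑' k : ℕ, r (g k) * ∏ j ∈ Finset.range k, u (g j)

include hq hq1 hq0 hr01

lemma Fterm_bound (g : ℕ → ℕ) (k : ℕ) :
    |r (g k) * ∏ j ∈ Finset.range k, u (g j)| ≤ q ^ k := by
  rw [abs_mul, Finset.abs_prod]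
  have h1 : |r (g k)| ≤ 1 := by
    have := hr01 (g k); rw [abs_of_pos this.1]; exact this.2.le
  have h2 : ∏ j ∈ Finset.range k, |u (g j)| ≤ q ^ k :=
    calc ∏ j ∈ Finset.range k, |u (g j)| ≤ ∏ _j ∈ Finset.range k, q :=
          Finset.prod_le_prod (fun j _ => abs_nonneg _) (fun j _ => hq (g j))
      _ = q ^ k := by rw [Finset.prod_const, Finset.card_range]
  calc |r (g k)| * ∏ j ∈ Finset.range k, |u (g j)| ≤ 1 * (q ^ k) := by
        apply mul_le_mul h1 h2 (Finset.prod_nonneg fun j _ => abs_nonneg _) zero_le_one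
    _ = q ^ k := one_mul _

lemma summable_Fterm (g : ℕ → ℕ) :
    Summable (fun k => r (g k) * ∏ j ∈ Finset.range k, u (g j)) :=
  Summable.of_norm_bounded (summable_geometric_of_lt_one hq0 hq1)
    (fun k => by rw [Real.norm_eq_abs]; exact Fterm_bound hq hq1 hq0 hr01 g k)

lemma fSeries_eq_Fsum (g : ℕ → ℕ) : fSeries u r g = Fsum u r g := by
  rw [Fsum, Summable.tsum_eq_zero_add (summable_Fterm hq hq1 hq0 hr01 g), fSeries]
  simp

lemma Fsum_bound (g : ℕ → ℕ) : |Fsum u r g| ≤ (1 - q)⁻¹ := by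
  have h := norm_tsum_le_tsum_norm ((summable_Fterm hq hq1 hq0 hr01 g).norm)
  rw [Fsum]
  refine (le_trans (by simpa using h) ?_)
  have := Summable.tsum_le_tsum (fun k => by rw [Real.norm_eq_abs]; exact Fterm_bound hq hq1 hq0 hr01 g k)
    ((summable_Fterm hq hq1 hq0 hr01 g).norm) (summable_geometric_of_lt_one hq0 hq1)
  simpa [tsum_geometric_of_lt_one hq0 hq1] using this

lemma Fsum_econs (a : ℕ) (g : ℕ → ℕ) :
    Fsum u r (econs a g) = r a + u a * Fsum u r g := by
  rw [Fsum, Summable.tsum_eq_zero_add (summable_Fterm hq hq1 hq0 hr01 _)]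
  have h0 : r ((econs a g) 0) * ∏ j ∈ Finset.range 0, u ((econs a g) j) = r a := by
    simp [econs]
  have h1 : ∀ k : ℕ, r ((econs a g) (k+1)) * ∏ j ∈ Finset.range (k+1), u ((econs a g) j)
      = u a * (r (g k) * ∏ j ∈ Finset.range k, u (g j)) := by
    intro k
    rw [Finset.prod_range_succ']
    simp only [econs]
    ring
  rw [h0]
  congr 1
  rw [Fsum, ← tsum_mul_left]
  exact tsum_congr h1

lemma Fsum_shift (g : ℕ → ℕ) :
    Fsum u r g = r (g 0) + u (g 0) * Fsum u r (fun n => g (n+1)) := by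
  conv_lhs => rw [← econs_shift g]
  exact Fsum_econs hq hq1 hq0 hr01 _ _


variable (u r) in
noncomputable def recH : ℕ → (ℕ → ℕ) → ℝ
  | 0, _ => 1
  | (N+1), g => r (g 0) + u (g 0) * recH N (fun n => g (n+1))

omit hq hq1 hq0 hr01 in
lemma r_add_u (hr : ∀ n, r n = 1 - ∑ i ∈ Finset.range (n + 1), u i)
    (hr01 : ∀ n, 0 < r n ∧ r n < 1) (a : ℕ) :
    0 < r a + u a ∧ r a + u a ≤ 1 := by
  cases a with
  | zero =>
    have : r 0 + u 0 = 1 := by rw [hr 0]; simp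
    rw [this]; exact ⟨one_pos, le_refl 1⟩
  | succ b =>
    have : r (b+1) + u (b+1) = r b := by
      rw [hr (b+1), hr b, Finset.sum_range_succ]; ring
    rw [this]; exact ⟨(hr01 b).1, (hr01 b).2.le⟩

omit hq hq1 hq0 hr01 in
lemma recH_succ (N : ℕ) (g : ℕ → ℕ) :
    recH u r (N+1) g = r (g 0) + u (g 0) * recH u r N (fun n => g (n+1)) := rfl

omit hq hq1 hq0 in
lemma recH_mem (hr : ∀ n, r n = 1 - ∑ i ∈ Finset.range (n + 1), u i) :
    ∀ N (g : ℕ → ℕ), 0 < recH u r N g ∧ recH u r N g ≤ 1 := by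
  intro N
  induction N with
  | zero => intro g; exact ⟨one_pos, le_refl 1⟩
  | succ N ih =>
    intro g
    obtain ⟨h1, h2⟩ := ih (fun n => g (n+1))
    have hra := hr01 (g 0)
    have hau := r_add_u hr hr01 (g 0)
    rw [recH_succ]
    rcases le_or_gt 0 (u (g 0)) with hu | hu
    · constructor
      · nlinarith
      · nlinarith
    · constructor
      · nlinarith
      · nlinarith

omit hq hq1 hq0 in
lemma recH_minmax (hr : ∀ n, r n = 1 - ∑ i ∈ Finset.range (n + 1), u i)
    (N : ℕ) (g : ℕ → ℕ) :
    min (r (g 0)) (r (g 0) + u (g 0)) ≤ recH u r (N+1) g ∧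
      recH u r (N+1) g ≤ max (r (g 0)) (r (g 0) + u (g 0)) := by
  obtain ⟨h1, h2⟩ := recH_mem hr01 hr N (fun n => g (n+1))
  rw [recH_succ]
  rcases le_or_gt 0 (u (g 0)) with hu | hu
  · constructor
    · refine le_trans (min_le_left _ _) ?_; nlinarith
    · refine le_trans ?_ (le_max_right _ _); nlinarith
  · constructor
    · refine le_trans (min_le_right _ _) ?_; nlinarith
    · refine le_trans ?_ (le_max_left _ _); nlinarith

lemma Fsum_approx : ∀ N (g : ℕ → ℕ),
    |Fsum u r g - recH u r N g| ≤ ((1-q)⁻¹ + 1) * q ^ N := by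
  intro N
  induction N with
  | zero =>
    intro g
    show |Fsum u r g - 1| ≤ _
    have := Fsum_bound hq hq1 hq0 hr01 g
    have h := abs_sub_abs_le_abs_sub (Fsum u r g) 1
    have : |Fsum u r g - 1| ≤ |Fsum u r g| + 1 := by
      calc |Fsum u r g - 1| ≤ |Fsum u r g| + |(1:ℝ)| := abs_sub _ _
        _ = |Fsum u r g| + 1 := by rw [abs_one]
    simpa using this.trans (by linarith [Fsum_bound hq hq1 hq0 hr01 g])
  | succ N ih =>
    intro g
    have hsh := Fsum_shift hq hq1 hq0 hr01 g
    have : Fsum u r g - recH u r (N+1) g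
        = u (g 0) * (Fsum u r (fun n => g (n+1)) - recH u r N (fun n => g (n+1))) := by
      rw [hsh, recH_succ]; ring
    rw [this, abs_mul]
    calc |u (g 0)| * |Fsum u r (fun n => g (n+1)) - recH u r N (fun n => g (n+1))|
        ≤ q * (((1-q)⁻¹ + 1) * q ^ N) := by
          apply mul_le_mul (hq (g 0)) (ih _) (abs_nonneg _) hq0
      _ = ((1-q)⁻¹ + 1) * q ^ (N+1) := by ring

lemma Fsum_ge_min (hr : ∀ n, r n = 1 - ∑ i ∈ Finset.range (n + 1), u i) (g : ℕ → ℕ) :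
    min (r (g 0)) (r (g 0) + u (g 0)) ≤ Fsum u r g := by
  have key : ∀ N : ℕ, min (r (g 0)) (r (g 0) + u (g 0)) - ((1-q)⁻¹ + 1) * q ^ (N+1)
      ≤ Fsum u r g := by
    intro N
    have h1 := (recH_minmax hr01 hr N g).1
    have h2 := Fsum_approx hq hq1 hq0 hr01 (N+1) g
    have := abs_le.1 h2
    linarith [this.1]
  have hlim : Filter.Tendsto
      (fun N : ℕ => min (r (g 0)) (r (g 0) + u (g 0)) - ((1-q)⁻¹ + 1) * q ^ (N+1))
      Filter.atTop (nhds (min (r (g 0)) (r (g 0) + u (g 0)))) := by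
    have h := tendsto_pow_atTop_nhds_zero_of_lt_one hq0 hq1
    have h2 : Filter.Tendsto (fun N : ℕ => q ^ (N+1)) Filter.atTop (nhds 0) :=
      h.comp (Filter.tendsto_add_atTop_nat 1)
    have := (h2.const_mul ((1-q)⁻¹ + 1)).const_sub (min (r (g 0)) (r (g 0) + u (g 0)))
    simpa using this
  exact le_of_tendsto hlim (Filter.Eventually.of_forall key)

lemma Fsum_le_max (hr : ∀ n, r n = 1 - ∑ i ∈ Finset.range (n + 1), u i) (g : ℕ → ℕ) :
    Fsum u r g ≤ max (r (g 0)) (r (g 0) + u (g 0)) := by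
  have key : ∀ N : ℕ, Fsum u r g
      ≤ max (r (g 0)) (r (g 0) + u (g 0)) + ((1-q)⁻¹ + 1) * q ^ (N+1) := by
    intro N
    have h1 := (recH_minmax hr01 hr N g).2
    have h2 := Fsum_approx hq hq1 hq0 hr01 (N+1) g
    have := abs_le.1 h2
    linarith [this.2]
  have hlim : Filter.Tendsto
      (fun N : ℕ => max (r (g 0)) (r (g 0) + u (g 0)) + ((1-q)⁻¹ + 1) * q ^ (N+1))
      Filter.atTop (nhds (max (r (g 0)) (r (g 0) + u (g 0)))) := by
    have h := tendsto_pow_atTop_nhds_zero_of_lt_one hq0 hq1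
    have h2 : Filter.Tendsto (fun N : ℕ => q ^ (N+1)) Filter.atTop (nhds 0) :=
      h.comp (Filter.tendsto_add_atTop_nat 1)
    have := (h2.const_mul ((1-q)⁻¹ + 1)).const_add (max (r (g 0)) (r (g 0) + u (g 0)))
    simpa using this
  exact ge_of_tendsto hlim (Filter.Eventually.of_forall key)

lemma Fsum_pos (hr : ∀ n, r n = 1 - ∑ i ∈ Finset.range (n + 1), u i) (g : ℕ → ℕ) :
    0 < Fsum u r g := by
  refine lt_of_lt_of_le ?_ (Fsum_ge_min hq hq1 hq0 hr01 hr g)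
  exact lt_min (hr01 (g 0)).1 (r_add_u hr hr01 (g 0)).1

lemma Fsum_le_one (hr : ∀ n, r n = 1 - ∑ i ∈ Finset.range (n + 1), u i) (g : ℕ → ℕ) :
    Fsum u r g ≤ 1 := by
  refine (Fsum_le_max hq hq1 hq0 hr01 hr g).trans ?_
  exact max_le (hr01 (g 0)).2.le (r_add_u hr hr01 (g 0)).2

lemma Fsum_zeroseq (hr : ∀ n, r n = 1 - ∑ i ∈ Finset.range (n + 1), u i) :
    Fsum u r (fun _ => 0) = 1 := by
  have h := Fsum_shift hq hq1 hq0 hr01 (fun _ => 0)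
  have hr0 : r 0 = 1 - u 0 := by rw [hr 0]; simp
  have hu0 : (1:ℝ) - u 0 > 0 := by have := (hr01 0).1; linarith
  have hkey : (1 - u 0) * (Fsum u r (fun _ => 0) - 1) = 0 := by
    rw [hr0] at h; nlinarith [h]
  rcases mul_eq_zero.1 hkey with h' | h'
  · exact absurd h' (ne_of_gt hu0)
  · linarith

omit hq hq1 hq0 in
lemma u0_pos (hr : ∀ n, r n = 1 - ∑ i ∈ Finset.range (n + 1), u i) : 0 < u 0 := by
  have hr0 : r 0 = 1 - u 0 := by rw [hr 0]; simp
  have := (hr01 0).2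
  linarith

lemma Fsum_lt_one (hr : ∀ n, r n = 1 - ∑ i ∈ Finset.range (n + 1), u i) :
    ∀ (k : ℕ) (g : ℕ → ℕ), g k ≠ 0 → Fsum u r g < 1 := by
  intro k
  induction k with
  | zero =>
    intro g hg
    refine lt_of_le_of_lt (Fsum_le_max hq hq1 hq0 hr01 hr g) ?_
    apply max_lt (hr01 (g 0)).2
    obtain ⟨b, hb⟩ := Nat.exists_eq_succ_of_ne_zero hg
    rw [hb]
    have : r (b+1) + u (b+1) = r b := by
      rw [hr (b+1), hr b, Finset.sum_range_succ]; ring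
    rw [this]; exact (hr01 b).2
  | succ k ih =>
    intro g hg
    rcases Nat.eq_zero_or_pos (g 0) with h0 | h0
    · have hFs := ih (fun n => g (n+1)) hg
      have hsh := Fsum_shift hq hq1 hq0 hr01 g
      rw [h0] at hsh
      have hu0 := u0_pos hr01 hr
      have hr0 : r 0 = 1 - u 0 := by rw [hr 0]; simp
      rw [hsh, hr0]
      nlinarith
    · refine lt_of_le_of_lt (Fsum_le_max hq hq1 hq0 hr01 hr g) ?_
      apply max_lt (hr01 (g 0)).2
      obtain ⟨b, hb⟩ := Nat.exists_eq_succ_of_ne_zero (Nat.pos_iff_ne_zero.1 h0)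
      rw [hb]
      have : r (b+1) + u (b+1) = r b := by
        rw [hr (b+1), hr b, Finset.sum_range_succ]; ring
      rw [this]; exact (hr01 b).2

lemma Fsum_preSeq (m : ℕ) (c : ℕ → ℕ) : ∀ t : ℕ → ℕ,
    Fsum u r (preSeq m c t) =
      (∑ n ∈ Finset.range m, r (c n) * ∏ j ∈ Finset.range n, u (c j))
      + (∏ j ∈ Finset.range m, u (c j)) * Fsum u r t := by
  induction m with
  | zero => intro t; simp [preSeq_zero]
  | succ m ih =>
    intro t
    rw [preSeq_succ, ih, Fsum_econs hq hq1 hq0 hr01]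
    rw [Finset.sum_range_succ, Finset.prod_range_succ]
    ring

end F

end S16


open S16 Finset in
set_option maxHeartbeats 4000000 in
/-- extremality of f at the E-rational point x₀ = Δ^E_{c₁…c_m i(0)}
(i ≥ 1): if u_{i-1}·u_i < 0 and D_m = ∏ u_{c_j} ≠ 0 then x₀ is a maximum point when
D_m·u_i > 0 and a minimum point when D_m·u_i < 0; if u_{i-1}·u_i ≥ 0 then x₀ is not
an extremum point. -/
theorem stmt16
    (u r : ℕ → ℝ)
    (hu_sum : HasSum u 1)
    (hu_abs : ∀ n, |u n| < 1)
    (hr : ∀ n, r n = 1 - ∑ i ∈ Finset.range (n + 1), u i)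
    (hr01 : ∀ n, 0 < r n ∧ r n < 1)
    (G : ℝ → ℕ → ℕ)
    (hG : ∀ x ∈ Set.Ioc (0:ℝ) 1, engelSum (G x) = x)
    (hGuniq : ∀ x ∈ Set.Ioc (0:ℝ) 1, ∀ g : ℕ → ℕ, engelSum g = x → g = G x)
    (f : ℝ → ℝ)
    (hf : ∀ x ∈ Set.Ioc (0:ℝ) 1, f x = fSeries u r (G x))
    (hf0 : f 0 = 0)
    (m : ℕ) (c : ℕ → ℕ) (i : ℕ) (hi : 1 ≤ i)
    (x₀ : ℝ) (hx₀ : x₀ = engelSum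
      (fun n => if n < m then c n else if n = m then i else 0)) :
    (u (i - 1) * u i < 0 → (∏ j ∈ Finset.range m, u (c j)) ≠ 0 →
      (0 < (∏ j ∈ Finset.range m, u (c j)) * u i → IsStrictLocalMaxPt f x₀) ∧
      ((∏ j ∈ Finset.range m, u (c j)) * u i < 0 → IsStrictLocalMinPt f x₀)) ∧
    (0 ≤ u (i - 1) * u i →
      ¬ (IsStrictLocalMaxPt f x₀ ∨ IsStrictLocalMinPt f x₀)) := by
  -- geometric bound on |u|
  obtain ⟨q, hq0, hq1, hq⟩ : ∃ q : ℝ, 0 ≤ q ∧ q < 1 ∧ ∀ n, |u n| ≤ q := by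
    have hsumu : Summable u := hu_sum.summable
    have htend : Filter.Tendsto u Filter.atTop (nhds 0) := hsumu.tendsto_atTop_zero
    obtain ⟨N, hN⟩ : ∃ N, ∀ n ≥ N, |u n| ≤ 1/2 := by
      obtain ⟨N, hN⟩ := Metric.tendsto_atTop.1 htend (1/2) (by norm_num)
      exact ⟨N, fun n hn => by
        have := hN n hn; rw [Real.dist_eq, sub_zero] at this; linarith⟩
    set s : Finset ℝ := insert (1/2) ((Finset.range N).image fun n => |u n|) with hs
    have hsne : s.Nonempty := ⟨1/2, Finset.mem_insert_self _ _⟩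
    refine ⟨s.max' hsne, ?_, ?_, ?_⟩
    · exact le_trans (by norm_num) (Finset.le_max' s _ (Finset.mem_insert_self _ _))
    · apply (Finset.max'_lt_iff s hsne).2
      intro y hy
      rcases Finset.mem_insert.1 hy with h | h
      · rw [h]; norm_num
      · obtain ⟨n, _, rfl⟩ := Finset.mem_image.1 h; exact hu_abs n
    · intro n
      rcases lt_or_ge n N with h | h
      · exact Finset.le_max' s _
          (Finset.mem_insert_of_mem (Finset.mem_image_of_mem _ (Finset.mem_range.2 h)))
      · exact (hN n h).trans (Finset.le_max' s _ (Finset.mem_insert_self _ _))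
  -- abbreviations
  set S : ℕ := ∑ j ∈ Finset.range m, c j with hS
  set A : ℝ := ∑ n ∈ Finset.range m, ∏ k ∈ Finset.range (n+1),
      ((2:ℝ) + ∑ j ∈ Finset.range (k+1), (c j : ℝ))⁻¹ with hA
  set P : ℝ := ∏ k ∈ Finset.range m, ((2:ℝ) + ∑ j ∈ Finset.range (k+1), (c j : ℝ))⁻¹ with hP
  set C : ℝ := ∑ n ∈ Finset.range m, r (c n) * ∏ j ∈ Finset.range n, u (c j) with hC
  set D : ℝ := ∏ j ∈ Finset.range m, u (c j) with hD
  have hPpos : 0 < P := Finset.prod_pos fun k _ =>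
    inv_pos.2 (lt_of_lt_of_le two_pos (by
      have : (0:ℝ) ≤ ∑ j ∈ Finset.range (k+1), (c j : ℝ) :=
        Finset.sum_nonneg fun j _ => Nat.cast_nonneg _
      linarith))
  have hAnn : 0 ≤ A := Finset.sum_nonneg fun n _ => le_of_lt (Finset.prod_pos fun k _ =>
    inv_pos.2 (lt_of_lt_of_le two_pos (by
      have : (0:ℝ) ≤ ∑ j ∈ Finset.range (k+1), (c j : ℝ) :=
        Finset.sum_nonneg fun j _ => Nat.cast_nonneg _
      linarith)))
  have hSnn : (0:ℝ) ≤ (S:ℝ) := Nat.cast_nonneg _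
  have hi' : (1:ℝ) ≤ (i:ℝ) := by exact_mod_cast hi
  set Qr : ℝ := (S:ℝ) + i + 1 with hQr
  set Ql : ℝ := (S:ℝ) + i + 2 with hQl
  have hQr2 : (2:ℝ) ≤ Qr := by rw [hQr]; linarith
  have hQrpos : (0:ℝ) < Qr := by linarith
  have hQlpos : (0:ℝ) < Ql := by rw [hQl]; linarith
  have hQr1 : (1:ℝ) ≤ Qr - 1 := by rw [hQr]; linarith
  -- x₀ value
  have hx₀seq : (fun n => if n < m then c n else if n = m then i else 0)
      = preSeq m c (econs i fun _ => 0) := by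
    funext n
    unfold preSeq
    by_cases h1 : n < m
    · simp [h1]
    · rw [if_neg h1, if_neg h1]
      by_cases h2 : n = m
      · have : n - m = 0 := by omega
        rw [if_pos h2, this]; rfl
      · obtain ⟨k, hk⟩ : ∃ k, n - m = k + 1 := ⟨n - m - 1, by omega⟩
        rw [if_neg h2, hk]; rfl
  have hx₀val : x₀ = A + P * Qr⁻¹ := by
    rw [hx₀, hx₀seq, engelSum_preSeq, addF_econs, engelSum_delta]
    congr 2
    rw [hQr]
    push_cast [hS]
    ring
  set B : ℝ := A + P * Qr⁻¹ * (1 + (Qr-1)⁻¹) with hB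
  set A' : ℝ := A + P * Ql⁻¹ with hA'
  have hBval : B = A + P * ((S:ℝ) + i)⁻¹ := by
    rw [hB]
    congr 1
    rw [mul_assoc]
    congr 1
    rw [hQr]
    have h1 : (S:ℝ) + i ≠ 0 := by linarith
    have h2 : (S:ℝ) + i + 1 ≠ 0 := by linarith
    field_simp
    rw [show (S:ℝ) + i + 1 - 1 = S + i by ring, mul_add, mul_one, mul_one_div_cancel h1]
  have hx₀B : x₀ < B := by
    rw [hx₀val, hB]
    have h1 : (0:ℝ) < (Qr-1)⁻¹ := inv_pos.2 (by linarith)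
    have h2 : 0 < P * Qr⁻¹ * (Qr-1)⁻¹ := mul_pos (mul_pos hPpos (inv_pos.2 hQrpos)) h1
    have e : P * Qr⁻¹ * (1 + (Qr-1)⁻¹) = P * Qr⁻¹ + P * Qr⁻¹ * (Qr-1)⁻¹ := by ring
    rw [e]
    linarith
  have hA'x₀ : A' < x₀ := by
    rw [hx₀val, hA']
    have : Ql⁻¹ < Qr⁻¹ := by
      apply inv_strictAnti₀ hQrpos
      rw [hQl, hQr]; linarith
    exact add_lt_add_right ((mul_lt_mul_iff_right₀ hPpos).2 this) A
  have hA'pos : 0 < A' := by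
    rw [hA']
    have := mul_pos hPpos (inv_pos.2 hQlpos)
    linarith
  have hx₀pos : 0 < x₀ := lt_trans hA'pos hA'x₀
  -- B is an engelSum, hence ≤ 1
  have hBseq : B = engelSum (preSeq m c (econs (i-1) fun _ => 0)) := by
    rw [engelSum_preSeq, addF_econs, engelSum_delta, hBval]
    congr 2
    have : ((i - 1 + S : ℕ) : ℝ) = (S:ℝ) + i - 1 := by
      push_cast [Nat.cast_sub hi]
      ring
    rw [this]
    ring
  have hBle1 : B ≤ 1 := by rw [hBseq]; exact engelSum_le_one _
  have hx₀mem : x₀ ∈ Set.Ioc (0:ℝ) 1 := ⟨hx₀pos, le_of_lt (lt_of_lt_of_le hx₀B hBle1)⟩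
  -- value of f at x₀
  have hfx₀ : f x₀ = C + D * (r i + u i) := by
    have hg : preSeq m c (econs i fun _ => 0) = G x₀ := by
      apply hGuniq x₀ hx₀mem
      rw [← hx₀seq, ← hx₀]
    rw [hf x₀ hx₀mem, ← hg, fSeries_eq_Fsum hq hq1 hq0 hr01,
      Fsum_preSeq hq hq1 hq0 hr01, Fsum_econs hq hq1 hq0 hr01,
      Fsum_zeroseq hq hq1 hq0 hr01 hr]
    rw [hC, hD, mul_one]
  have hriu : r (i-1) = r i + u i := by
    obtain ⟨b, rfl⟩ := Nat.exists_eq_add_of_le hi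
    have h1 : 1 + b - 1 = b := by omega
    have h2 : r (b+1) + u (b+1) = r b := by
      rw [hr (b+1), hr b, Finset.sum_range_succ]; ring
    have h3 : 1 + b = b + 1 := by omega
    rw [h1, h3, h2]
  -- RIGHT side structure
  have hright : ∀ x : ℝ, x₀ < x → x ≤ B → ∃ F : ℝ, 0 < F ∧ F ≤ 1 ∧
      f x - f x₀ = (D * u (i-1)) * F := by
    intro x hx1 hx2
    have hQrne : Qr ≠ 0 := ne_of_gt hQrpos
    have hQr1ne : Qr - 1 ≠ 0 := by linarith
    have hPne : P ≠ 0 := ne_of_gt hPpos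
    set s : ℝ := Qr * (x - A) / P - 1 with hs
    have hxs : A + P * Qr⁻¹ * (1 + s) = x := by rw [hs]; field_simp; ring
    have hPQ : 0 < P * Qr⁻¹ := mul_pos hPpos (inv_pos.2 hQrpos)
    have hs0 : 0 < s := by
      have h := hx1
      rw [hx₀val, ← hxs] at h
      have := (mul_lt_mul_iff_right₀ hPQ).1 (by linarith : P * Qr⁻¹ * 1 < P * Qr⁻¹ * (1 + s))
      linarith
    have hsle : s ≤ (Qr - 1)⁻¹ := by
      have h := hx2
      rw [hB, ← hxs] at h
      have := (mul_le_mul_iff_right₀ hPQ).1 (by linarith : P * Qr⁻¹ * (1+s) ≤ P * Qr⁻¹ * (1 + (Qr-1)⁻¹))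
      linarith
    have hs1 : s ≤ 1 := le_trans hsle (by
      rw [inv_le_one_iff₀]; right; linarith)
    have hsmem : s ∈ Set.Ioc (0:ℝ) 1 := ⟨hs0, hs1⟩
    have hgs : engelSum (G s) = s := hG s hsmem
    set g : ℕ → ℕ := G s with hgdef
    have hg0 : S + i - 1 ≤ g 0 := by
      have h1 : ((2:ℝ) + g 0)⁻¹ < s := engelSum_gt g |>.trans_eq hgs
      have h2 : s ≤ (Qr - 1)⁻¹ := hsle
      have h3 : Qr - 1 < 2 + g 0 := by
        have hg0nn : (0:ℝ) ≤ (g 0 : ℝ) := Nat.cast_nonneg _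
        by_contra hcon
        push_neg at hcon
        have := inv_anti₀ (by linarith) hcon
        linarith
      have h4 : (S:ℝ) + i < 2 + g 0 := by rw [hQr] at h3; linarith
      have h5 : S + i < 2 + g 0 := by exact_mod_cast h4
      omega
    set w : ℕ → ℕ := econs (g 0 - (S + i - 1)) (fun n => g (n+1)) with hw
    set d : ℕ → ℕ := preSeq m c (econs (i-1) w) with hd
    have hde : engelSum d = x := by
      rw [hd, engelSum_preSeq, addF_econs, engelSum_econs, addF_econs, ← hS, ← hA, ← hP]
      have hgg : econs (g 0 - (S + i - 1) + (i - 1 + S)) (fun n => g (n+1)) = g := by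
        have : g 0 - (S + i - 1) + (i - 1 + S) = g 0 := by omega
        rw [this, econs_shift]
      rw [hgg, hgs]
      have hcast : ((2:ℝ) + ((i - 1 + S : ℕ) : ℝ)) = Qr := by
        rw [hQr]
        push_cast [Nat.cast_sub hi]
        ring
      rw [hcast, ← hxs]
      ring
    have hxmem : x ∈ Set.Ioc (0:ℝ) 1 := ⟨lt_trans hx₀pos hx1, le_trans hx2 hBle1⟩
    have hgx : d = G x := hGuniq x hxmem d hde
    have hfx : f x = C + D * (r (i-1) + u (i-1) * Fsum u r w) := by
      rw [hf x hxmem, ← hgx, hd, fSeries_eq_Fsum hq hq1 hq0 hr01,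
        Fsum_preSeq hq hq1 hq0 hr01, Fsum_econs hq hq1 hq0 hr01, hC, hD]
    refine ⟨Fsum u r w, Fsum_pos hq hq1 hq0 hr01 hr w, Fsum_le_one hq hq1 hq0 hr01 hr w, ?_⟩
    rw [hfx, hfx₀, hriu]
    ring
  -- LEFT side structure
  have hleft : ∀ x : ℝ, A' < x → x < x₀ → ∃ E : ℝ, E < 0 ∧
      f x - f x₀ = (D * u i) * E := by
    intro x hx1 hx2
    have hQlne : Ql ≠ 0 := ne_of_gt hQlpos
    have hQl1pos : (0:ℝ) < Ql - 1 := by rw [hQl]; linarith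
    have hQl1ne : Ql - 1 ≠ 0 := ne_of_gt hQl1pos
    have hPne : P ≠ 0 := ne_of_gt hPpos
    set s : ℝ := Ql * (x - A) / P - 1 with hs
    have hxs : A + P * Ql⁻¹ * (1 + s) = x := by rw [hs]; field_simp; ring
    have hPQ : 0 < P * Ql⁻¹ := mul_pos hPpos (inv_pos.2 hQlpos)
    have hs0 : 0 < s := by
      have h := hx1
      rw [hA', ← hxs] at h
      have := (mul_lt_mul_iff_right₀ hPQ).1 (by linarith : P * Ql⁻¹ * 1 < P * Ql⁻¹ * (1 + s))
      linarith
    have hx₀l : x₀ = A + P * Ql⁻¹ * (1 + (Ql - 1)⁻¹) := by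
      rw [hx₀val]
      have hq1q : Ql⁻¹ * (1 + (Ql-1)⁻¹) = Qr⁻¹ := by
        have : Qr = Ql - 1 := by rw [hQr, hQl]; ring
        rw [this]
        field_simp
        ring
      rw [mul_assoc, hq1q]
    have hslt : s < (Ql - 1)⁻¹ := by
      have h := hx2
      rw [hx₀l, ← hxs] at h
      have := (mul_lt_mul_iff_right₀ hPQ).1 (by linarith : P * Ql⁻¹ * (1+s) < P * Ql⁻¹ * (1 + (Ql-1)⁻¹))
      linarith
    have hs1 : s ≤ 1 := le_of_lt (lt_of_lt_of_le hslt (by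
      rw [inv_le_one_iff₀]; right; rw [hQl]; linarith))
    have hsmem : s ∈ Set.Ioc (0:ℝ) 1 := ⟨hs0, hs1⟩
    have hgs : engelSum (G s) = s := hG s hsmem
    set g : ℕ → ℕ := G s with hgdef
    have hg0 : S + i ≤ g 0 := by
      have h1 : ((2:ℝ) + g 0)⁻¹ < s := engelSum_gt g |>.trans_eq hgs
      have h3 : Ql - 1 < 2 + g 0 := by
        have hg0nn : (0:ℝ) ≤ (g 0 : ℝ) := Nat.cast_nonneg _
        by_contra hcon
        push_neg at hcon
        have := inv_anti₀ (by linarith) hcon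
        linarith
      have h4 : (S:ℝ) + i + 1 < 2 + g 0 := by rw [hQl] at h3; linarith
      have h5 : S + i + 1 < 2 + g 0 := by exact_mod_cast h4
      omega
    set w : ℕ → ℕ := econs (g 0 - (S + i)) (fun n => g (n+1)) with hw
    set d : ℕ → ℕ := preSeq m c (econs i w) with hd
    have hde : engelSum d = x := by
      rw [hd, engelSum_preSeq, addF_econs, engelSum_econs, addF_econs, ← hS, ← hA, ← hP]
      have hgg : econs (g 0 - (S + i) + (i + S)) (fun n => g (n+1)) = g := by
        have : g 0 - (S + i) + (i + S) = g 0 := by omega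
        rw [this, econs_shift]
      rw [hgg, hgs]
      have hcast : ((2:ℝ) + ((i + S : ℕ) : ℝ)) = Ql := by
        rw [hQl]; push_cast; ring
      rw [hcast, ← hxs]
      ring
    have hxmem : x ∈ Set.Ioc (0:ℝ) 1 :=
      ⟨lt_trans hA'pos hx1, le_of_lt (lt_of_lt_of_le (lt_trans hx2 hx₀B) hBle1)⟩
    have hgx : d = G x := hGuniq x hxmem d hde
    have hfx : f x = C + D * (r i + u i * Fsum u r w) := by
      rw [hf x hxmem, ← hgx, hd, fSeries_eq_Fsum hq hq1 hq0 hr01,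
        Fsum_preSeq hq hq1 hq0 hr01, Fsum_econs hq hq1 hq0 hr01, hC, hD]
    have hwne : ∃ k, w k ≠ 0 := by
      by_contra hcon
      push_neg at hcon
      have hw0 : w = fun _ => 0 := funext hcon
      have : d = preSeq m c (econs i fun _ => 0) := by rw [hd, hw0]
      rw [this, ← hx₀seq, ← hx₀] at hde
      exact absurd hde (ne_of_gt hx2)
    obtain ⟨k, hk⟩ := hwne
    refine ⟨Fsum u r w - 1, by linarith [Fsum_lt_one hq hq1 hq0 hr01 hr k w hk], ?_⟩
    rw [hfx, hfx₀]
    ring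
  -- filter facts
  have hmemnb : Set.Ioo A' B ∈ nhds x₀ := isOpen_Ioo.mem_nhds ⟨hA'x₀, hx₀B⟩
  have hfreq_right : ∀ p : ℝ → Prop, (∀ᶠ t in nhdsWithin x₀ {x₀}ᶜ, p t) →
      ∃ t, x₀ < t ∧ t < B ∧ p t := by
    intro p hp
    have h1 : ∀ᶠ t in nhdsWithin x₀ (Set.Ioi x₀), p t :=
      hp.filter_mono (nhdsWithin_mono x₀ (fun t ht => ne_of_gt ht))
    have h2 : ∀ᶠ t in nhdsWithin x₀ (Set.Ioi x₀), t ∈ Set.Ioo x₀ B :=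
      Ioo_mem_nhdsGT_of_mem ⟨le_refl x₀, hx₀B⟩
    obtain ⟨t, ht1, ht2⟩ := (h1.and h2).exists
    exact ⟨t, ht2.1, ht2.2, ht1⟩
  have hfreq_left : ∀ p : ℝ → Prop, (∀ᶠ t in nhdsWithin x₀ {x₀}ᶜ, p t) →
      ∃ t, A' < t ∧ t < x₀ ∧ p t := by
    intro p hp
    have h1 : ∀ᶠ t in nhdsWithin x₀ (Set.Iio x₀), p t :=
      hp.filter_mono (nhdsWithin_mono x₀ (fun t ht => ne_of_lt ht))
    have h2 : ∀ᶠ t in nhdsWithin x₀ (Set.Iio x₀), t ∈ Set.Ioo A' x₀ :=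
      Ioo_mem_nhdsLT_of_mem ⟨hA'x₀, le_refl x₀⟩
    obtain ⟨t, ht1, ht2⟩ := (h1.and h2).exists
    exact ⟨t, ht2.1, ht2.2, ht1⟩
  constructor
  · -- part 1
    intro h1 hDne
    have hDsq : 0 < D^2 := by positivity
    constructor
    · -- max
      intro hDui
      have hkey : (D * u (i-1)) * (D * u i) < 0 := by
        have e : (D * u (i-1)) * (D * u i) = D^2 * (u (i-1) * u i) := by ring
        rw [e]; exact mul_neg_of_pos_of_neg hDsq h1
      have hDm : D * u (i-1) < 0 := by
        by_contra hcon2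
        push_neg at hcon2
        exact absurd hkey (not_lt.2 (mul_nonneg hcon2 hDui.le))
      show ∀ᶠ t in nhdsWithin x₀ {x₀}ᶜ, f t < f x₀
      filter_upwards [mem_nhdsWithin_of_mem_nhds hmemnb, self_mem_nhdsWithin] with t ht hne
      have hne' : t ≠ x₀ := hne
      rcases lt_or_gt_of_ne hne' with hlt | hgt
      · obtain ⟨E, hE, heq⟩ := hleft t ht.1 hlt
        exact sub_neg.mp (by rw [heq]; exact mul_neg_of_pos_of_neg hDui hE)
      · obtain ⟨F, hF, _, heq⟩ := hright t hgt (le_of_lt ht.2)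
        exact sub_neg.mp (by rw [heq]; exact mul_neg_of_neg_of_pos hDm hF)
    · -- min
      intro hDui
      have hkey : (D * u (i-1)) * (D * u i) < 0 := by
        have e : (D * u (i-1)) * (D * u i) = D^2 * (u (i-1) * u i) := by ring
        rw [e]; exact mul_neg_of_pos_of_neg hDsq h1
      have hDm : 0 < D * u (i-1) := by
        by_contra hcon2
        push_neg at hcon2
        exact absurd hkey (not_lt.2 (mul_nonneg_of_nonpos_of_nonpos hcon2 hDui.le))
      show ∀ᶠ t in nhdsWithin x₀ {x₀}ᶜ, f x₀ < f t
      filter_upwards [mem_nhdsWithin_of_mem_nhds hmemnb, self_mem_nhdsWithin] with t ht hne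
      have hne' : t ≠ x₀ := hne
      rcases lt_or_gt_of_ne hne' with hlt | hgt
      · obtain ⟨E, hE, heq⟩ := hleft t ht.1 hlt
        exact sub_pos.mp (by rw [heq]; exact mul_pos_of_neg_of_neg hDui hE)
      · obtain ⟨F, hF, _, heq⟩ := hright t hgt (le_of_lt ht.2)
        exact sub_pos.mp (by rw [heq]; exact mul_pos hDm hF)
  · -- part 2
    intro h2 hcon
    by_cases hD1 : D * u (i-1) = 0
    · rcases hcon with Hmax | Hmin
      · obtain ⟨t, ht1, ht2, ht3⟩ := hfreq_right (fun t => f t < f x₀) Hmax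
        obtain ⟨F, hF, _, heq⟩ := hright t ht1 (le_of_lt ht2)
        rw [hD1, zero_mul] at heq
        exact (ne_of_lt ht3) (sub_eq_zero.mp heq)
      · obtain ⟨t, ht1, ht2, ht3⟩ := hfreq_right (fun t => f x₀ < f t) Hmin
        obtain ⟨F, hF, _, heq⟩ := hright t ht1 (le_of_lt ht2)
        rw [hD1, zero_mul] at heq
        exact (ne_of_gt ht3) (sub_eq_zero.mp heq)
    · by_cases hD2 : D * u i = 0
      · rcases hcon with Hmax | Hmin
        · obtain ⟨t, ht1, ht2, ht3⟩ := hfreq_left (fun t => f t < f x₀) Hmax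
          obtain ⟨E, hE, heq⟩ := hleft t ht1 ht2
          rw [hD2, zero_mul] at heq
          exact (ne_of_lt ht3) (sub_eq_zero.mp heq)
        · obtain ⟨t, ht1, ht2, ht3⟩ := hfreq_left (fun t => f x₀ < f t) Hmin
          obtain ⟨E, hE, heq⟩ := hleft t ht1 ht2
          rw [hD2, zero_mul] at heq
          exact (ne_of_gt ht3) (sub_eq_zero.mp heq)
      · have hsame : 0 < (D * u (i-1)) * (D * u i) := by
          have hmul : (D * u (i-1)) * (D * u i) = D^2 * (u (i-1) * u i) := by ring
          have hDne : D ≠ 0 := fun h => hD1 (by rw [h, zero_mul])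
          have hD2pos : 0 < D^2 := by
            have e : D^2 = D * D := by ring
            rw [e]
            rcases hDne.lt_or_gt with h|h
            · exact mul_pos_of_neg_of_neg h h
            · exact mul_pos h h
          rcases lt_or_eq_of_le h2 with hpos | hzero
          · rw [hmul]; exact mul_pos hD2pos hpos
          · exfalso
            rcases mul_eq_zero.1 hzero.symm with h | h
            · exact hD1 (by rw [h, mul_zero])
            · exact hD2 (by rw [h, mul_zero])
        rcases hcon with Hmax | Hmin
        · rcases lt_or_gt_of_ne hD1 with hneg | hpos
          · -- D*u(i-1) < 0 then D*u i < 0, left side gives f t > f x₀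
            have hDl : D * u i < 0 := by
              by_contra hcc
              push_neg at hcc
              exact absurd hsame (not_lt.2 (mul_nonpos_of_nonpos_of_nonneg hneg.le hcc))
            obtain ⟨t, ht1, ht2, ht3⟩ := hfreq_left (fun t => f t < f x₀) Hmax
            obtain ⟨E, hE, heq⟩ := hleft t ht1 ht2
            exact lt_asymm ht3 (sub_pos.mp (by rw [heq]; exact mul_pos_of_neg_of_neg hDl hE))
          · obtain ⟨t, ht1, ht2, ht3⟩ := hfreq_right (fun t => f t < f x₀) Hmax
            obtain ⟨F, hF, _, heq⟩ := hright t ht1 (le_of_lt ht2)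
            exact lt_asymm ht3 (sub_pos.mp (by rw [heq]; exact mul_pos hpos hF))
        · rcases lt_or_gt_of_ne hD1 with hneg | hpos
          · obtain ⟨t, ht1, ht2, ht3⟩ := hfreq_right (fun t => f x₀ < f t) Hmin
            obtain ⟨F, hF, _, heq⟩ := hright t ht1 (le_of_lt ht2)
            exact lt_asymm ht3 (sub_neg.mp (by rw [heq]; exact mul_neg_of_neg_of_pos hneg hF))
          · have hDl : 0 < D * u i := by
              by_contra hcc
              push_neg at hcc
              exact absurd hsame (not_lt.2 (mul_nonpos_of_nonneg_of_nonpos hpos.le hcc))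
            obtain ⟨t, ht1, ht2, ht3⟩ := hfreq_left (fun t => f x₀ < f t) Hmin
            obtain ⟨E, hE, heq⟩ := hleft t ht1 ht2
            exact lt_asymm ht3 (sub_neg.mp (by rw [heq]; exact mul_neg_of_pos_of_neg hDl hE))
end
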